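/- arXiv:math/0311190 — 3 statements merged into one kernel-verified Lean document; each statement's English description precedes it below -/
import Mathlib

section
/- Let G be a finite Coxeter group realized in Euclidean space V, J ⊆ S a subset satisfying the (−1)-condition with associated involution σ_J and parabolic subgroup G_J. Then the centralizer C_G(σ_J) equals the normalizer N_G(G_J) of the parabolic subgroup G_J. -/
private lemma stmt8_refl_congr {V : Type*} [NormedAddCommGroup V]
    [InnerProductSpace ℝ V] {K K' : Submodule ℝ V} [K.HasOrthogonalProjection] [K'.HasOrthogonalProjection] (h : K = K') : Submodule.reflection K = Submodule.reflection K' := by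
  subst h; rfl

open Submodule in
private lemma stmt8_conj_reflection {V : Type*} [NormedAddCommGroup V]
    [InnerProductSpace ℝ V] [FiniteDimensional ℝ V] (g : V ≃ₗᵢ[ℝ] V) (α : V) :
    g * reflection (ℝ ∙ α)ᗮ * g⁻¹ = reflection (ℝ ∙ g α)ᗮ := by
  have hK : ((ℝ ∙ α)ᗮ).map (g.toLinearEquiv : V →ₗ[ℝ] V) = (ℝ ∙ g α)ᗮ := by
    ext v
    rw [Submodule.mem_map_equiv, Submodule.mem_orthogonal_singleton_iff_inner_right,
      Submodule.mem_orthogonal_singleton_iff_inner_right]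
    have h1 : (inner ℝ (g α) v : ℝ) = inner ℝ α (g.toLinearEquiv.symm v) := by
      conv_lhs => rw [← g.apply_symm_apply v]
      exact g.inner_map_map α (g.symm v)
    rw [h1]
  have h3 : reflection (((ℝ ∙ α)ᗮ).map (g.toLinearEquiv : V →ₗ[ℝ] V)) =
      reflection (ℝ ∙ g α)ᗮ := by
    exact stmt8_refl_congr hK
  ext v
  have h2 := reflection_map_apply (𝕜 := ℝ) g ((ℝ ∙ α)ᗮ) v
  rw [h3] at h2
  rw [h2]
  rfl

/-- for a finite Coxeter group `G` realised in Euclidean space `V`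
with root system `R`, and a subset `J` of simple roots satisfying the
`(−1)`-condition with associated involution `σ = σ_J` (acting as `−Id` on `V_J`
and as `Id` on `V_Jᗮ`), the centraliser of `σ_J` in `G` coincides with the
normaliser of the parabolic subgroup `G_J` in `G`.
Key input (hypothesis `hRJ`): the roots of `G_J` are exactly `R ∩ V_J`. -/
theorem stmt8 {V : Type*} [NormedAddCommGroup V] [InnerProductSpace ℝ V]
    [FiniteDimensional ℝ V] {ι : Type*} (J : Set ι) (e : ι → V)
    (R : Finset V) (hR0 : ∀ α ∈ R, α ≠ 0)
    (G : Subgroup (V ≃ₗᵢ[ℝ] V)) [Finite G]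
    (hGgen : G = Subgroup.closure {g : V ≃ₗᵢ[ℝ] V | ∃ α ∈ R, g = Submodule.reflection (ℝ ∙ α)ᗮ})
    (hstab : ∀ g ∈ G, ∀ α ∈ R, g α ∈ R)
    (heR : ∀ j ∈ J, e j ∈ R)
    (GJ : Subgroup (V ≃ₗᵢ[ℝ] V))
    (hGJ : GJ = Subgroup.closure {g : V ≃ₗᵢ[ℝ] V | ∃ j ∈ J, g = Submodule.reflection (ℝ ∙ e j)ᗮ})
    (hGJG : GJ ≤ G)
    (VJ : Submodule ℝ V) (hVJ : VJ = Submodule.span ℝ (e '' J))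
    (hRJ : ∀ α ∈ R, α ∈ VJ → Submodule.reflection (ℝ ∙ α)ᗮ ∈ GJ)
    (σ : V ≃ₗᵢ[ℝ] V) (hσJ : σ ∈ GJ)
    (hminus : ∀ v ∈ VJ, σ v = -v) (hplus : ∀ v ∈ VJᗮ, σ v = v) :
    {g : V ≃ₗᵢ[ℝ] V | g ∈ G ∧ Commute g σ} =
      {g : V ≃ₗᵢ[ℝ] V | g ∈ G ∧ ∀ h : V ≃ₗᵢ[ℝ] V, h ∈ GJ ↔ g * h * g⁻¹ ∈ GJ} := by
  have hspan : ∀ j ∈ J, e j ∈ VJ := fun j hj =>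
    hVJ ▸ Submodule.subset_span ⟨j, hj, rfl⟩
  -- the (-1)-eigenspace of σ is VJ
  have heig : ∀ v : V, σ v = -v → v ∈ VJ := by
    intro v hv
    obtain ⟨a, ha, b, hb, hab⟩ := VJ.exists_add_mem_mem_orthogonal v
    have h1 : σ v = -a + b := by rw [hab, map_add, hminus a ha, hplus b hb]
    have h2 : -a + b = -a + -b := by
      rw [← h1, hv, hab, neg_add]
    have hb0 : b = 0 := by
      have h3 : b = -b := add_left_cancel h2
      have h4 : (2 : ℝ) • b = 0 := by
        calc (2 : ℝ) • b = b + b := two_smul ℝ b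
          _ = b + -b := by rw [← h3]
          _ = 0 := by simp
      simpa using (smul_eq_zero.mp h4).resolve_left (by norm_num)
    rw [hab, hb0, add_zero]; exact ha
  -- every element of GJ fixes VJᗮ pointwise
  have hfix : ∀ h ∈ GJ, ∀ v ∈ VJᗮ, h v = v := by
    intro h hh
    rw [hGJ] at hh
    induction hh using Subgroup.closure_induction with
    | mem x hx =>
      obtain ⟨j, hj, rfl⟩ := hx
      intro v hv
      refine Submodule.reflection_mem_subspace_eq_self ?_
      exact Submodule.orthogonal_le
        ((Submodule.span_singleton_le_iff_mem _ _).mpr (hspan j hj)) hv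
    | one => intro v hv; rfl
    | mul x y hx hy ihx ihy =>
      intro v hv
      have : (x * y) v = x (y v) := rfl
      rw [this, ihy v hv, ihx v hv]
    | inv x hx ihx =>
      intro v hv
      have h5 := congrArg x.symm (ihx v hv)
      rw [x.symm_apply_apply] at h5
      show x.symm v = v
      rw [← h5]
  -- conjugation by an element of G preserving VJ maps GJ into GJ
  have hconj : ∀ g ∈ G, (∀ v ∈ VJ, g v ∈ VJ) → ∀ h ∈ GJ, g * h * g⁻¹ ∈ GJ := by
    intro g hgG hgV h hh
    rw [hGJ] at hh
    induction hh using Subgroup.closure_induction with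
    | mem x hx =>
      obtain ⟨j, hj, rfl⟩ := hx
      rw [stmt8_conj_reflection g (e j)]
      exact hRJ _ (hstab g hgG _ (heR j hj)) (hgV _ (hspan j hj))
    | one =>
      have : g * 1 * g⁻¹ = 1 := by group
      rw [this]; exact GJ.one_mem
    | mul x y hx hy ihx ihy =>
      have : g * (x * y) * g⁻¹ = (g * x * g⁻¹) * (g * y * g⁻¹) := by group
      rw [this]; exact mul_mem ihx ihy
    | inv x hx ihx =>
      have : g * x⁻¹ * g⁻¹ = (g * x * g⁻¹)⁻¹ := by group
      rw [this]; exact inv_mem ihx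
  ext g
  simp only [Set.mem_setOf_eq]
  constructor
  · rintro ⟨hgG, hcomm⟩
    refine ⟨hgG, fun h => ?_⟩
    have hgmap : ∀ (k : V ≃ₗᵢ[ℝ] V), Commute k σ → ∀ v ∈ VJ, k v ∈ VJ := by
      intro k hk v hv
      apply heig
      have h1 : σ (k v) = (σ * k) v := rfl
      have h2 : (k * σ) v = k (σ v) := rfl
      rw [h1, ← hk, h2, hminus v hv, map_neg]
    constructor
    · exact fun hh => hconj g hgG (hgmap g hcomm) h hh
    · intro hh
      have h5 := hconj g⁻¹ (inv_mem hgG) (hgmap g⁻¹ hcomm.inv_left) _ hh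
      have h6 : g⁻¹ * (g * h * g⁻¹) * g⁻¹⁻¹ = h := by group
      rwa [h6] at h5
  · rintro ⟨hgG, hnorm⟩
    refine ⟨hgG, ?_⟩
    have hτ : g * σ * g⁻¹ ∈ GJ := (hnorm σ).mp hσJ
    have hτ' : g⁻¹ * σ * g⁻¹⁻¹ ∈ GJ := by
      refine (hnorm _).mpr ?_
      have : g * (g⁻¹ * σ * g⁻¹⁻¹) * g⁻¹ = σ := by group
      rw [this]; exact hσJ
    -- any k with k σ k⁻¹ ∈ GJ maps VJ into VJ
    have key : ∀ (k : V ≃ₗᵢ[ℝ] V), (k * σ * k⁻¹ ∈ GJ) → ∀ v ∈ VJ, k v ∈ VJ := by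
      intro k hk v hv
      rw [← VJ.orthogonal_orthogonal, Submodule.mem_orthogonal]
      intro w hw
      have h1 : (k * σ * k⁻¹) (k v) = -(k v) := by
        have : (k * σ * k⁻¹) (k v) = k (σ (k.symm (k v))) := rfl
        rw [this, k.symm_apply_apply, hminus v hv, map_neg]
      have h2 : (k * σ * k⁻¹) w = w := hfix _ hk w hw
      have h3 : (inner ℝ w (k v) : ℝ) =
          inner ℝ ((k * σ * k⁻¹) w) ((k * σ * k⁻¹) (k v)) :=
        ((k * σ * k⁻¹).inner_map_map w (k v)).symm
      rw [h1, h2, inner_neg_right] at h3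
      linarith
    have hgV : ∀ v ∈ VJ, g v ∈ VJ := key g hτ
    have hgV' : ∀ v ∈ VJ, g⁻¹ v ∈ VJ := key g⁻¹ hτ'
    have hgperp : ∀ b ∈ VJᗮ, g b ∈ VJᗮ := by
      intro b hb
      rw [Submodule.mem_orthogonal]
      intro u hu
      have h1 : (inner ℝ u (g b) : ℝ) = inner ℝ (g⁻¹ u) b := by
        conv_lhs => rw [← g.apply_symm_apply u]
        exact g.inner_map_map (g.symm u) b
      rw [h1]
      exact (Submodule.mem_orthogonal _ _).mp hb _ (hgV' u hu)
    -- conclude g σ = σ g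
    show g * σ = σ * g
    ext v
    obtain ⟨a, ha, b, hb, hab⟩ := VJ.exists_add_mem_mem_orthogonal v
    have hL : (g * σ) v = -(g a) + g b := by
      have : (g * σ) v = g (σ v) := rfl
      rw [this, hab, map_add, hminus a ha, hplus b hb, map_add, map_neg]
    have hR' : (σ * g) v = -(g a) + g b := by
      have : (σ * g) v = σ (g v) := rfl
      rw [this, hab, map_add, map_add, hminus _ (hgV a ha), hplus _ (hgperp b hb)]
    rw [hL, hR']
end

section
/- Let σ be an involution in the symmetric group S_n, and consider its action on the configuration space M_n of n distinct points in ℂ composed with complex conjugation; call this map σ̄. If σ is a product of m ≥ 1 disjoint transpositions, then the fixed point set of σ̄ in M_n is homeomorphic to a disjoint union of finitely many copies of M_m × ℝ^{n−2m}, where M_m is the configuration space of m distinct points of ℂ. -/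
/-- The configuration space `M_N` of `N` distinct (labelled) points in `ℂ`. -/
abbrev ConfigSpace (N : ℕ) : Type := {z : Fin N → ℂ // Function.Injective z}

open Complex Function Finset

noncomputable def hpHomeo : {z : ℂ // 0 < z.im} ≃ₜ ℂ where
  toFun z := (z.1.re : ℂ) + (Real.log z.1.im : ℂ) * Complex.I
  invFun w := ⟨(w.re : ℂ) + (Real.exp w.im : ℂ) * Complex.I, by simp [-Complex.ofReal_exp, Real.exp_pos]⟩
  left_inv z := by
    ext1
    have := z.2
    simp [Complex.ext_iff, Real.exp_log this]
  right_inv w := by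
    simp [Complex.ext_iff, -Complex.ofReal_exp, Real.log_exp]
  continuous_toFun := by
    apply Continuous.add
    · exact Complex.continuous_ofReal.comp (Complex.continuous_re.comp continuous_subtype_val)
    · apply Continuous.mul _ continuous_const
      apply Complex.continuous_ofReal.comp
      rw [continuous_iff_continuousAt]
      intro z
      have h1 : ContinuousAt (fun z : {z : ℂ // 0 < z.im} => z.1.im) z :=
        (Complex.continuous_im.comp continuous_subtype_val).continuousAt
      exact ContinuousAt.comp (f := fun z : {z : ℂ // 0 < z.im} => z.1.im)
        (Real.continuousAt_log (ne_of_gt z.2)) h1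
  continuous_invFun := by
    apply Continuous.subtype_mk
    fun_prop

/-! ### StrictMono tuples homeomorphic to ℝ^k -/

noncomputable def smH (k : ℕ) (t : Fin k → ℝ) (j : ℕ) : ℝ :=
  if hj : j < k then (if j = 0 then t ⟨j, hj⟩ else Real.exp (t ⟨j, hj⟩)) else 0

noncomputable def smF (k : ℕ) (t : Fin k → ℝ) : Fin k → ℝ :=
  fun i => ∑ j ∈ Finset.range (i.1 + 1), smH k t j

theorem smF_strictMono (k : ℕ) (t : Fin k → ℝ) : StrictMono (smF k t) := by
  intro i i' hii
  have hle : i.1 + 1 ≤ i'.1 + 1 := by omega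
  have hsplit := Finset.sum_range_add_sum_Ico (smH k t) hle
  simp only [smF]
  rw [← hsplit]
  have hpos : 0 < ∑ j ∈ Finset.Ico (i.1 + 1) (i'.1 + 1), smH k t j := by
    apply Finset.sum_pos
    · intro j hj
      simp only [Finset.mem_Ico] at hj
      have hjk : j < k := by omega
      have hj0 : j ≠ 0 := by omega
      simp [smH, hjk, hj0, Real.exp_pos]
    · exact ⟨i.1 + 1, by simp [Finset.mem_Ico]; omega⟩
  linarith

noncomputable def smG (k : ℕ) (y : Fin k → ℝ) : Fin k → ℝ :=
  fun i => if h0 : i.1 = 0 then y i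
    else Real.log (y i - y ⟨i.1 - 1, by omega⟩)

theorem smG_smF (k : ℕ) (t : Fin k → ℝ) : smG k (smF k t) = t := by
  funext i
  rcases Nat.eq_zero_or_eq_succ_pred i.1 with h0 | hs
  · simp only [smG, h0, dif_pos]
    simp only [smF, h0, Finset.range_one, Finset.sum_singleton]
    have : smH k t 0 = t i := by
      have hk : (0:ℕ) < k := by omega
      have hi0 : (⟨0, hk⟩ : Fin k) = i := Fin.ext (by simpa using h0.symm)
      simp [smH, dif_pos hk, hi0]
    simp [h0, this]
  · set v := i.1 - 1 with hv
    have hiv : i.1 = v + 1 := hs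
    have hvk : v + 1 < k := hiv ▸ i.2
    simp only [smG, hiv, dif_neg (Nat.succ_ne_zero v), Nat.add_sub_cancel]
    have hdiff : smF k t i - smF k t ⟨v, by omega⟩ = smH k t (v + 1) := by
      simp only [smF, hiv]
      rw [Finset.sum_range_succ]
      ring
    have : smH k t (v + 1) = Real.exp (t i) := by
      simp only [smH, dif_pos hvk, if_neg (Nat.succ_ne_zero v)]
      congr 1
      exact congrArg t (Fin.ext hiv.symm)
    rw [hdiff, this, Real.log_exp]

theorem smF_smG (k : ℕ) (y : Fin k → ℝ) (hy : StrictMono y) : smF k (smG k y) = y := by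
  funext i
  obtain ⟨v, hvk⟩ := i
  induction v with
  | zero =>
    simp only [smF, Finset.range_one, Finset.sum_singleton]
    simp [smH, hvk, smG]
  | succ v ih =>
    have hvk' : v < k := by omega
    simp only [smF] at ih ⊢
    rw [Finset.sum_range_succ, ih hvk']
    have hterm : smH k (smG k y) (v + 1) = y ⟨v + 1, hvk⟩ - y ⟨v, hvk'⟩ := by
      simp only [smH, dif_pos hvk, if_neg (Nat.succ_ne_zero v), smG, Nat.add_sub_cancel]
      have hlt : y ⟨v, hvk'⟩ < y ⟨v + 1, hvk⟩ := hy (by simp [Fin.lt_def])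
      simp only [dif_neg (Nat.succ_ne_zero v)]
      rw [Real.exp_log (by linarith)]
    rw [hterm]
    ring

theorem smF_continuous (k : ℕ) : Continuous (smF k) := by
  apply continuous_pi
  intro i
  apply continuous_finset_sum
  intro j _
  simp only [smH]
  split_ifs with h1 h2
  · exact continuous_apply _
  · exact Real.continuous_exp.comp (continuous_apply _)
  · exact continuous_const

noncomputable def strictMonoHomeo (k : ℕ) : {y : Fin k → ℝ // StrictMono y} ≃ₜ (Fin k → ℝ) where
  toFun y := smG k y.1
  invFun t := ⟨smF k t, smF_strictMono k t⟩
  left_inv y := Subtype.ext (smF_smG k y.1 y.2)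
  right_inv t := smG_smF k t
  continuous_toFun := by
    apply continuous_pi
    intro i
    simp only [smG]
    split_ifs with h0
    · exact (continuous_apply i).comp continuous_subtype_val
    · rw [continuous_iff_continuousAt]
      intro y
      have harg : ContinuousAt (fun y : {y : Fin k → ℝ // StrictMono y} =>
          y.1 i - y.1 ⟨i.1 - 1, by omega⟩) y := by
        exact (((continuous_apply i).comp continuous_subtype_val).sub
          (((continuous_apply (⟨i.1 - 1, by omega⟩ : Fin k)).comp continuous_subtype_val))).continuousAt
      have hpos : y.1 i - y.1 ⟨i.1 - 1, by omega⟩ > 0 := by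
        have := y.2 (show (⟨i.1 - 1, by omega⟩ : Fin k) < i by simp [Fin.lt_def]; omega)
        linarith
      exact ContinuousAt.comp (f := fun y : {y : Fin k → ℝ // StrictMono y} =>
        y.1 i - y.1 ⟨i.1 - 1, by omega⟩) (Real.continuousAt_log (ne_of_gt hpos)) harg
  continuous_invFun := (smF_continuous k).subtype_mk _

/-! ### general lemma: continuity with a discrete first factor -/

theorem continuous_of_discrete_fst {K X Y : Type*} [TopologicalSpace K] [DiscreteTopology K]
    [TopologicalSpace X] [TopologicalSpace Y] {g : K × X → Y}
    (hg : ∀ p, Continuous fun x => g (p, x)) : Continuous g := by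
  rw [continuous_iff_continuousAt]
  rintro ⟨p, x⟩
  have hev : (fun q : K × X => g (p, q.2)) =ᶠ[nhds (p, x)] g := by
    have hopen : IsOpen {q : K × X | q.1 = p} :=
      (isOpen_discrete ({p} : Set K)).preimage continuous_fst
    filter_upwards [hopen.mem_nhds (by exact rfl)] with q hq
    obtain ⟨q1, q2⟩ := q
    have h1 : q1 = p := hq
    rw [h1]
  exact ContinuousAt.congr (((hg p).comp continuous_snd).continuousAt) hev

/-! ### injective real tuples -/

noncomputable def permEquivFin (k : ℕ) : Equiv.Perm (Fin k) ≃ Fin (k.factorial) :=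
  Fintype.equivFinOfCardEq (by simp [Fintype.card_perm])

theorem sort_unique {k : ℕ} {x : Fin k → ℝ} (hx : Function.Injective x)
    (τ : Equiv.Perm (Fin k)) (hmono : Monotone (x ∘ τ)) : τ = Tuple.sort x := by
  rw [Tuple.eq_sort_iff]
  refine ⟨hmono, fun i j hij heq => absurd (τ.injective (hx heq)) (ne_of_lt hij)⟩

theorem sort_eq_of_strictMono {k : ℕ} {x : Fin k → ℝ} (hx : Function.Injective x)
    (τ : Equiv.Perm (Fin k)) (hsm : StrictMono (x ∘ τ)) : Tuple.sort x = τ :=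
  (sort_unique hx τ hsm.monotone).symm

theorem isOpen_strictMonoPerm (k : ℕ) (τ : Equiv.Perm (Fin k)) :
    IsOpen {f : Fin k → ℝ | StrictMono (f ∘ τ)} := by
  have : {f : Fin k → ℝ | StrictMono (f ∘ τ)} =
      ⋂ (p : Fin k × Fin k) (_ : p.1 < p.2), {f | f (τ p.1) < f (τ p.2)} := by
    ext f
    simp only [Set.mem_setOf_eq, Set.mem_iInter]
    exact ⟨fun h p hp => h hp, fun h i j hij => h (i, j) hij⟩
  rw [this]
  exact isOpen_iInter_of_finite fun p => isOpen_iInter_of_finite fun hp =>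
    isOpen_lt (continuous_apply _) (continuous_apply _)

noncomputable def injHomeo (k : ℕ) :
    {x : Fin k → ℝ // Function.Injective x} ≃ₜ
      Fin (k.factorial) × {y : Fin k → ℝ // StrictMono y} where
  toFun x := (permEquivFin k (Tuple.sort x.1),
    ⟨x.1 ∘ Tuple.sort x.1, (Tuple.monotone_sort x.1).strictMono_of_injective
      (x.2.comp (Tuple.sort x.1).injective)⟩)
  invFun p := ⟨p.2.1 ∘ ((permEquivFin k).symm p.1).symm,
    p.2.2.injective.comp (Equiv.injective _)⟩
  left_inv x := by
    ext i
    simp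
  right_inv := by
    rintro ⟨p, y⟩
    have hinj : Function.Injective (y.1 ∘ ((permEquivFin k).symm p).symm) :=
      y.2.injective.comp (Equiv.injective _)
    have hsort : Tuple.sort (y.1 ∘ ((permEquivFin k).symm p).symm) = (permEquivFin k).symm p := by
      apply sort_eq_of_strictMono hinj
      have : (y.1 ∘ ((permEquivFin k).symm p).symm) ∘ ((permEquivFin k).symm p) = y.1 := by
        funext i; simp
      rw [this]
      exact y.2
    refine Prod.ext ?_ ?_
    · simp [hsort]
    · ext i
      simp [hsort]
  continuous_toFun := by
    have hc : Continuous fun x : {x : Fin k → ℝ // Function.Injective x} =>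
        permEquivFin k (Tuple.sort x.1) := by
      rw [continuous_discrete_rng]
      intro p
      have : (fun x : {x : Fin k → ℝ // Function.Injective x} =>
          permEquivFin k (Tuple.sort x.1)) ⁻¹' {p} =
          Subtype.val ⁻¹' {f : Fin k → ℝ | StrictMono (f ∘ ((permEquivFin k).symm p))} := by
        ext x
        simp only [Set.mem_preimage, Set.mem_singleton_iff, Set.mem_setOf_eq]
        constructor
        · intro h
          have hs : Tuple.sort x.1 = (permEquivFin k).symm p := by
            rw [← h]; simp
          rw [← hs]
          exact (Tuple.monotone_sort x.1).strictMono_of_injective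
            (x.2.comp (Tuple.sort x.1).injective)
        · intro h
          rw [sort_eq_of_strictMono x.2 _ h]
          simp
      rw [this]
      exact (isOpen_strictMonoPerm k _).preimage continuous_subtype_val
    refine Continuous.prodMk hc (Continuous.subtype_mk ?_ _)
    have hg : Continuous fun q : Fin (k.factorial) × (Fin k → ℝ) =>
        q.2 ∘ ((permEquivFin k).symm q.1) := by
      apply continuous_of_discrete_fst
      intro p
      refine continuous_pi fun i => ?_
      show Continuous fun a : Fin k → ℝ => a (((permEquivFin k).symm p) i)
      exact continuous_apply _
    have heq : (fun x : {x : Fin k → ℝ // Function.Injective x} => x.1 ∘ Tuple.sort x.1) =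
        (fun q : Fin (k.factorial) × (Fin k → ℝ) => q.2 ∘ ((permEquivFin k).symm q.1)) ∘
          (fun x => (permEquivFin k (Tuple.sort x.1), x.1)) := by
      funext x
      simp
    rw [heq]
    exact hg.comp (hc.prodMk continuous_subtype_val)
  continuous_invFun := by
    apply Continuous.subtype_mk
    apply continuous_of_discrete_fst
      (g := fun q : Fin (k.factorial) × {y : Fin k → ℝ // StrictMono y} =>
        q.2.1 ∘ ((permEquivFin k).symm q.1).symm)
    intro p
    refine continuous_pi fun i => ?_
    show Continuous fun a : {y : Fin k → ℝ // StrictMono y} =>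
      a.1 (((permEquivFin k).symm p).symm i)
    exact (continuous_apply _).comp continuous_subtype_val

/-! ### splitting off signs of imaginary parts -/

abbrev PairCond (m : ℕ) (w : Fin m → ℂ) : Prop :=
  (∀ i, (w i).im ≠ 0) ∧ ∀ i j, i ≠ j → w i ≠ w j ∧ w i ≠ (starRingEnd ℂ) (w j)

abbrev UpperCond (m : ℕ) (u : Fin m → ℂ) : Prop :=
  Function.Injective u ∧ ∀ i, 0 < (u i).im

noncomputable def boolEquivFin (m : ℕ) : (Fin m → Bool) ≃ Fin (2 ^ m) :=
  Fintype.equivFinOfCardEq (by simp [Fintype.card_fun])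

noncomputable def signsHomeo (m : ℕ) :
    {w : Fin m → ℂ // PairCond m w} ≃ₜ Fin (2 ^ m) × {u : Fin m → ℂ // UpperCond m u} where
  toFun w := (boolEquivFin m (fun i => decide (0 < (w.1 i).im)),
    ⟨fun i => if 0 < (w.1 i).im then w.1 i else (starRingEnd ℂ) (w.1 i), by
      constructor
      · intro i j hij
        by_contra hne
        have h := w.2.2 i j hne
        have h' := w.2.2 j i (Ne.symm hne)
        by_cases hi : 0 < (w.1 i).im <;> by_cases hj : 0 < (w.1 j).im <;>
          simp only [hi, hj, if_true, if_false] at hij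
        · exact h.1 hij
        · exact h.2 hij
        · exact h'.2 hij.symm
        · exact h.1 (star_injective hij)
      · intro i
        by_cases hi : 0 < (w.1 i).im
        · simpa [hi] using hi
        · have := w.2.1 i
          simp only [hi, if_neg, if_false, Complex.conj_im]
          simp only [not_lt] at hi
          rcases lt_or_eq_of_le hi with h | h
          · simpa using h
          · exact absurd h this⟩)
  invFun p := ⟨fun i => if (boolEquivFin m).symm p.1 i then p.2.1 i
      else (starRingEnd ℂ) (p.2.1 i), by
    obtain ⟨q, u⟩ := p
    refine ⟨fun i => ?_, fun i j hij => ?_⟩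
    · by_cases hb : (boolEquivFin m).symm q i <;>
        simp [hb, ne_of_gt (u.2.2 i), ne_of_lt, neg_ne_zero, ne_of_gt (u.2.2 i)]
    · have hne : u.1 i ≠ u.1 j := fun h => hij (u.2.1 h)
      have him : u.1 i ≠ (starRingEnd ℂ) (u.1 j) := by
        intro h
        have := u.2.2 i
        rw [h] at this
        simp only [Complex.conj_im] at this
        linarith [u.2.2 j]
      have him' : (starRingEnd ℂ) (u.1 i) ≠ u.1 j := by
        intro h
        have := u.2.2 j
        rw [← h] at this
        simp only [Complex.conj_im] at this
        linarith [u.2.2 i]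
      have hconj : (starRingEnd ℂ) (u.1 i) ≠ (starRingEnd ℂ) (u.1 j) :=
        fun h => hne (star_injective h)
      constructor <;> by_cases hi : (boolEquivFin m).symm q i <;>
          by_cases hj : (boolEquivFin m).symm q j <;>
        simp only [hi, hj, if_true, Bool.false_eq_true, if_false, Complex.conj_conj] <;>
        first
          | exact hne
          | exact him
          | exact him'
          | exact hconj⟩
  left_inv w := by
    ext i
    simp only [Equiv.symm_apply_apply]
    by_cases hi : 0 < (w.1 i).im
    · simp [hi]
    · simp [hi]
  right_inv := by
    rintro ⟨q, u⟩
    have hsigns : (fun i => decide (0 < ((fun i => if (boolEquivFin m).symm q i then u.1 i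
        else (starRingEnd ℂ) (u.1 i)) i).im)) = (boolEquivFin m).symm q := by
      funext i
      by_cases hb : (boolEquivFin m).symm q i
      · simp [hb, u.2.2 i]
      · simp only [Bool.not_eq_true] at hb
        simp only [hb, Bool.false_eq_true, if_false, Complex.conj_im, decide_eq_false_iff_not,
          not_lt]
        linarith [u.2.2 i]
    refine Prod.ext ?_ ?_
    · show boolEquivFin m _ = q
      rw [hsigns, Equiv.apply_symm_apply]
    · ext i
      by_cases hb : (boolEquivFin m).symm q i
      · simp [hb, u.2.2 i]
      · simp only [Bool.not_eq_true] at hb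
        have h1 : ¬ ((u.1 i).im < 0) := not_lt.mpr (le_of_lt (u.2.2 i))
        simp [hb, h1]
  continuous_toFun := by
    have hc : Continuous fun w : {w : Fin m → ℂ // PairCond m w} =>
        boolEquivFin m (fun i => decide (0 < (w.1 i).im)) := by
      rw [continuous_discrete_rng]
      intro p
      have hSeq : (fun w : {w : Fin m → ℂ // PairCond m w} =>
          boolEquivFin m (fun i => decide (0 < (w.1 i).im))) ⁻¹' {p} =
          ⋂ i, (if (boolEquivFin m).symm p i
            then Subtype.val ⁻¹' {f : Fin m → ℂ | 0 < (f i).im}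
            else Subtype.val ⁻¹' {f : Fin m → ℂ | (f i).im < 0}) := by
        ext w
        simp only [Set.mem_preimage, Set.mem_singleton_iff,
          Equiv.apply_eq_iff_eq_symm_apply, funext_iff, Set.mem_iInter]
        constructor
        · intro h i
          have hi := h i
          by_cases hb : (boolEquivFin m).symm p i
          · rw [hb] at hi
            simp only [hb, if_true, Set.mem_preimage, Set.mem_setOf_eq]
            exact of_decide_eq_true hi
          · simp only [Bool.not_eq_true] at hb
            rw [hb] at hi
            simp only [hb, Bool.false_eq_true, if_false, Set.mem_preimage, Set.mem_setOf_eq]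
            have h2 := of_decide_eq_false hi
            rcases lt_or_eq_of_le (not_lt.mp h2) with h' | h'
            · exact h'
            · exact absurd h' (w.2.1 i)
        · intro h i
          have hi := h i
          by_cases hb : (boolEquivFin m).symm p i
          · simp only [hb, if_true, Set.mem_preimage, Set.mem_setOf_eq] at hi
            rw [hb]
            exact decide_eq_true hi
          · simp only [Bool.not_eq_true] at hb
            simp only [hb, Bool.false_eq_true, if_false, Set.mem_preimage,
              Set.mem_setOf_eq] at hi
            rw [hb]
            exact decide_eq_false (not_lt.mpr (le_of_lt hi))
      rw [hSeq]
      refine isOpen_iInter_of_finite fun i => ?_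
      split_ifs
      · exact (isOpen_lt continuous_const
          (Complex.continuous_im.comp (continuous_apply i))).preimage continuous_subtype_val
      · exact (isOpen_lt (Complex.continuous_im.comp (continuous_apply i))
          continuous_const).preimage continuous_subtype_val
    refine Continuous.prodMk hc (Continuous.subtype_mk ?_ _)
    have hg : Continuous fun q : Fin (2 ^ m) × (Fin m → ℂ) =>
        fun i => if (boolEquivFin m).symm q.1 i then q.2 i
          else (starRingEnd ℂ) (q.2 i) := by
      apply continuous_of_discrete_fst
      intro p
      refine continuous_pi fun i => ?_
      show Continuous fun a : Fin m → ℂ =>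
        if (boolEquivFin m).symm p i then a i else (starRingEnd ℂ) (a i)
      split_ifs
      · exact continuous_apply i
      · exact continuous_star.comp (continuous_apply i)
    have heq : (fun w : {w : Fin m → ℂ // PairCond m w} =>
        fun i => if 0 < (w.1 i).im then w.1 i else (starRingEnd ℂ) (w.1 i)) =
        (fun q : Fin (2 ^ m) × (Fin m → ℂ) =>
          fun i => if (boolEquivFin m).symm q.1 i then q.2 i else (starRingEnd ℂ) (q.2 i)) ∘
        (fun w => (boolEquivFin m (fun i => decide (0 < (w.1 i).im)), w.1)) := by
      funext w
      funext i
      simp only [Function.comp_apply, Equiv.symm_apply_apply]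
      by_cases h : 0 < (w.1 i).im <;> simp [h]
    rw [heq]
    exact hg.comp (hc.prodMk continuous_subtype_val)
  continuous_invFun := by
    apply Continuous.subtype_mk
    apply continuous_of_discrete_fst
      (g := fun q : Fin (2 ^ m) × {u : Fin m → ℂ // UpperCond m u} =>
        fun i => if (boolEquivFin m).symm q.1 i then q.2.1 i else (starRingEnd ℂ) (q.2.1 i))
    intro p
    refine continuous_pi fun i => ?_
    show Continuous fun a : {u : Fin m → ℂ // UpperCond m u} =>
      if (boolEquivFin m).symm p i then a.1 i else (starRingEnd ℂ) (a.1 i)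
    split_ifs
    · exact (continuous_apply i).comp continuous_subtype_val
    · exact continuous_star.comp ((continuous_apply i).comp continuous_subtype_val)

noncomputable def upperHomeo (m : ℕ) :
    {u : Fin m → ℂ // UpperCond m u} ≃ₜ ConfigSpace m where
  toFun u := ⟨fun i => hpHomeo ⟨u.1 i, u.2.2 i⟩, by
    intro i j h
    have := hpHomeo.injective (by exact h)
    have h2 : u.1 i = u.1 j := congrArg Subtype.val this
    exact u.2.1 h2⟩
  invFun v := ⟨fun i => (hpHomeo.symm (v.1 i)).1, by
    constructor
    · intro i j h
      exact v.2 (by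
        have : hpHomeo.symm (v.1 i) = hpHomeo.symm (v.1 j) := Subtype.ext h
        exact hpHomeo.symm.injective this)
    · exact fun i => (hpHomeo.symm (v.1 i)).2⟩
  left_inv u := by
    ext i
    show (hpHomeo.symm (hpHomeo ⟨u.1 i, u.2.2 i⟩)).1 = u.1 i
    rw [Homeomorph.symm_apply_apply]
  right_inv v := by
    ext i
    show hpHomeo ⟨(hpHomeo.symm (v.1 i)).1, _⟩ = v.1 i
    rw [Subtype.eta, Homeomorph.apply_symm_apply]
  continuous_toFun := by
    refine Continuous.subtype_mk (continuous_pi fun i => ?_) _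
    exact hpHomeo.continuous.comp
      (((continuous_apply i).comp continuous_subtype_val).subtype_mk _)
  continuous_invFun := by
    refine Continuous.subtype_mk (continuous_pi fun i => ?_) _
    exact continuous_subtype_val.comp
      (hpHomeo.symm.continuous.comp ((continuous_apply i).comp continuous_subtype_val))

noncomputable def recon {n m k : ℕ} (σ : Equiv.Perm (Fin n)) (R Fs : Finset (Fin n))
    (eR : {i // i ∈ R} ≃ Fin m) (eF : {i // i ∈ Fs} ≃ Fin k)
    (hF : ∀ i, σ i = i → i ∈ Fs) (hRi : ∀ i, σ i ≠ i → i < σ i → i ∈ R)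
    (hRs : ∀ i, σ i ≠ i → ¬ i < σ i → σ i ∈ R)
    (w : Fin m → ℂ) (x : Fin k → ℝ) : Fin n → ℂ :=
  fun i => if h1 : σ i = i then ((x (eF ⟨i, hF i h1⟩) : ℝ) : ℂ)
    else if h2 : i < σ i then w (eR ⟨i, hRi i h1 h2⟩)
    else (starRingEnd ℂ) (w (eR ⟨σ i, hRs i h1 h2⟩))

theorem recon_eq_F {n m k : ℕ} (σ : Equiv.Perm (Fin n)) (R Fs : Finset (Fin n))
    (eR : {i // i ∈ R} ≃ Fin m) (eF : {i // i ∈ Fs} ≃ Fin k)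
    (hF : ∀ i, σ i = i → i ∈ Fs) (hRi : ∀ i, σ i ≠ i → i < σ i → i ∈ R)
    (hRs : ∀ i, σ i ≠ i → ¬ i < σ i → σ i ∈ R)
    (w : Fin m → ℂ) (x : Fin k → ℝ) (i : Fin n) (h1 : σ i = i) :
    recon σ R Fs eR eF hF hRi hRs w x i = ((x (eF ⟨i, hF i h1⟩) : ℝ) : ℂ) := by
  simp only [recon, dif_pos h1]

theorem recon_eq_R {n m k : ℕ} (σ : Equiv.Perm (Fin n)) (R Fs : Finset (Fin n))
    (eR : {i // i ∈ R} ≃ Fin m) (eF : {i // i ∈ Fs} ≃ Fin k)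
    (hF : ∀ i, σ i = i → i ∈ Fs) (hRi : ∀ i, σ i ≠ i → i < σ i → i ∈ R)
    (hRs : ∀ i, σ i ≠ i → ¬ i < σ i → σ i ∈ R)
    (w : Fin m → ℂ) (x : Fin k → ℝ) (i : Fin n) (h1 : σ i ≠ i) (h2 : i < σ i) :
    recon σ R Fs eR eF hF hRi hRs w x i = w (eR ⟨i, hRi i h1 h2⟩) := by
  simp only [recon, dif_neg h1, dif_pos h2]

theorem recon_eq_S {n m k : ℕ} (σ : Equiv.Perm (Fin n)) (R Fs : Finset (Fin n))
    (eR : {i // i ∈ R} ≃ Fin m) (eF : {i // i ∈ Fs} ≃ Fin k)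
    (hF : ∀ i, σ i = i → i ∈ Fs) (hRi : ∀ i, σ i ≠ i → i < σ i → i ∈ R)
    (hRs : ∀ i, σ i ≠ i → ¬ i < σ i → σ i ∈ R)
    (w : Fin m → ℂ) (x : Fin k → ℝ) (i : Fin n) (h1 : σ i ≠ i) (h2 : ¬ i < σ i) :
    recon σ R Fs eR eF hF hRi hRs w x i = (starRingEnd ℂ) (w (eR ⟨σ i, hRs i h1 h2⟩)) := by
  simp only [recon, dif_neg h1, dif_neg h2]

theorem step1 {n m : ℕ} (σ : Equiv.Perm (Fin n)) (hσσ : ∀ i, σ (σ i) = i)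
    (hσm : (Finset.univ.filter fun i : Fin n => σ i ≠ i).card = 2 * m) :
    Nonempty (({z : ConfigSpace n // ∀ i, (starRingEnd ℂ) (z.1 (σ i)) = z.1 i}) ≃ₜ
      ({w : Fin m → ℂ // PairCond m w} ×
        {x : Fin (n - 2 * m) → ℝ // Function.Injective x})) := by
  classical
  set k := n - 2 * m with hk
  set R : Finset (Fin n) := Finset.univ.filter (fun i => σ i ≠ i ∧ i < σ i) with hR
  set Fs : Finset (Fin n) := Finset.univ.filter (fun i => σ i = i) with hFs
  have hmemR : ∀ i : Fin n, i ∈ R ↔ (σ i ≠ i ∧ i < σ i) := by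
    intro i; simp [hR]
  have hmemFs : ∀ i : Fin n, i ∈ Fs ↔ σ i = i := by
    intro i; simp [hFs]
  have hcardR : R.card = m := by
    have hsplit : (Finset.univ.filter fun i : Fin n => σ i ≠ i) =
        R ∪ (Finset.univ.filter (fun i => σ i ≠ i ∧ σ i < i)) := by
      ext i
      simp only [Finset.mem_filter, Finset.mem_union, Finset.mem_univ, true_and, hR]
      constructor
      · intro h
        rcases lt_or_gt_of_ne h with h' | h'
        · exact Or.inr ⟨h, h'⟩
        · exact Or.inl ⟨h, h'⟩
      · rintro (⟨h, _⟩ | ⟨h, _⟩) <;> exact h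
    have hdisj : Disjoint R (Finset.univ.filter (fun i : Fin n => σ i ≠ i ∧ σ i < i)) := by
      rw [Finset.disjoint_left]
      intro i h1 h2
      rw [hmemR] at h1
      simp only [Finset.mem_filter] at h2
      exact absurd h2.2.2 (not_lt.mpr (le_of_lt h1.2))
    have hbij : R.card = (Finset.univ.filter (fun i : Fin n => σ i ≠ i ∧ σ i < i)).card := by
      apply Finset.card_bij (fun i _ => σ i)
      · intro a ha
        rw [hmemR] at ha
        simp only [Finset.mem_filter, Finset.mem_univ, true_and, hσσ]
        exact ⟨fun e => ha.1 e.symm, ha.2⟩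
      · intro a _ b _ h
        exact σ.injective h
      · intro b hb
        simp only [Finset.mem_filter, Finset.mem_univ, true_and] at hb
        refine ⟨σ b, ?_, hσσ b⟩
        rw [hmemR, hσσ]
        exact ⟨fun e => hb.1 e.symm, hb.2⟩
    rw [hsplit, Finset.card_union_of_disjoint hdisj, ← hbij] at hσm
    omega
  have hcardFs : Fs.card = k := by
    have hpm := Finset.card_filter_add_card_filter_not
      (s := (Finset.univ : Finset (Fin n))) (p := fun i => σ i = i)
    have hTcard : (Finset.univ.filter fun i : Fin n => ¬ σ i = i).card = 2 * m := by
      rw [← hσm]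
    have h2mn : Fs.card + 2 * m = n := by
      rw [← hTcard, hFs]
      simpa using hpm
    omega
  have eR : {i // i ∈ R} ≃ Fin m := Finset.equivFinOfCardEq hcardR
  have eF : {i // i ∈ Fs} ≃ Fin k := Finset.equivFinOfCardEq hcardFs
  have hmemF' : ∀ i, σ i = i → i ∈ Fs := fun i h => (hmemFs i).mpr h
  have hmemRi : ∀ i, σ i ≠ i → i < σ i → i ∈ R := fun i h1 h2 => (hmemR i).mpr ⟨h1, h2⟩
  have hmemRs : ∀ i, σ i ≠ i → ¬ i < σ i → σ i ∈ R := by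
    intro i h1 h2
    rw [hmemR, hσσ]
    exact ⟨fun e => h1 e.symm, lt_of_le_of_ne (not_lt.mp h2) h1⟩
  have hconj : ∀ z : {z : ConfigSpace n // ∀ i, (starRingEnd ℂ) (z.1 (σ i)) = z.1 i},
      ∀ i, z.1.1 (σ i) = (starRingEnd ℂ) (z.1.1 i) := by
    intro z i
    rw [← z.2 i, Complex.conj_conj]
  have hreal : ∀ z : {z : ConfigSpace n // ∀ i, (starRingEnd ℂ) (z.1 (σ i)) = z.1 i},
      ∀ i, σ i = i → (z.1.1 i).im = 0 := by
    intro z i h1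
    have hzi := z.2 i
    rw [h1] at hzi
    exact Complex.conj_eq_iff_im.mp hzi
  have hnr : ∀ z : {z : ConfigSpace n // ∀ i, (starRingEnd ℂ) (z.1 (σ i)) = z.1 i},
      ∀ i, σ i ≠ i → (z.1.1 i).im ≠ 0 := by
    intro z i h1 h0
    have hc := hconj z i
    rw [Complex.conj_eq_iff_im.mpr h0] at hc
    exact h1 (z.1.2 hc)
  -- forward map components are well-defined
  have hPC : ∀ z : {z : ConfigSpace n // ∀ i, (starRingEnd ℂ) (z.1 (σ i)) = z.1 i},
      PairCond m (fun j => z.1.1 (eR.symm j).1) := by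
    intro z
    constructor
    · intro j
      exact hnr z _ ((hmemR _).mp (eR.symm j).2).1
    · intro j j' hjj
      have hne : (eR.symm j).1 ≠ (eR.symm j').1 :=
        fun h => hjj (eR.symm.injective (Subtype.ext h))
      constructor
      · exact fun h => hne (z.1.2 h)
      · intro h
        rw [← hconj z (eR.symm j').1] at h
        have hab := z.1.2 h
        have ha := (hmemR _).mp (eR.symm j).2
        have hb := (hmemR _).mp (eR.symm j').2
        have h1 : (eR.symm j).1 < σ (eR.symm j).1 := ha.2
        have h2 : (eR.symm j').1 < σ (eR.symm j').1 := hb.2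
        rw [hab] at h1
        have h3 : σ (σ (eR.symm j').1) = (eR.symm j').1 := hσσ _
        rw [h3] at h1
        exact absurd h2 (not_lt.mpr (le_of_lt h1))
  have hXI : ∀ z : {z : ConfigSpace n // ∀ i, (starRingEnd ℂ) (z.1 (σ i)) = z.1 i},
      Function.Injective (fun j => (z.1.1 (eF.symm j).1).re) := by
    intro z j j' h
    have him : (z.1.1 (eF.symm j).1).im = (z.1.1 (eF.symm j').1).im := by
      rw [hreal z _ ((hmemFs _).mp (eF.symm j).2), hreal z _ ((hmemFs _).mp (eF.symm j').2)]
    have : z.1.1 (eF.symm j).1 = z.1.1 (eF.symm j').1 := Complex.ext h him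
    exact eF.symm.injective (Subtype.ext (z.1.2 this))
  -- reconstructed function: nonreal at moved points
  have hrim : ∀ (w : {w : Fin m → ℂ // PairCond m w}) (x : {x : Fin k → ℝ // Function.Injective x})
      (i : Fin n), σ i ≠ i →
      (recon σ R Fs eR eF hmemF' hmemRi hmemRs w.1 x.1 i).im ≠ 0 := by
    intro w x i h1
    by_cases h2 : i < σ i
    · rw [recon_eq_R σ R Fs eR eF hmemF' hmemRi hmemRs w.1 x.1 i h1 h2]
      exact w.2.1 _
    · rw [recon_eq_S σ R Fs eR eF hmemF' hmemRi hmemRs w.1 x.1 i h1 h2]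
      simpa using w.2.1 _
  have hZI : ∀ p : {w : Fin m → ℂ // PairCond m w} × {x : Fin k → ℝ // Function.Injective x},
      Function.Injective (recon σ R Fs eR eF hmemF' hmemRi hmemRs p.1.1 p.2.1) := by
    rintro ⟨w, x⟩ a b heq
    by_cases ha1 : σ a = a <;> by_cases hb1 : σ b = b
    · rw [recon_eq_F σ R Fs eR eF hmemF' hmemRi hmemRs w.1 x.1 a ha1,
        recon_eq_F σ R Fs eR eF hmemF' hmemRi hmemRs w.1 x.1 b hb1] at heq
      have h1 := x.2 (Complex.ofReal_injective heq)
      exact congrArg Subtype.val (eF.injective h1)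
    · exfalso
      apply hrim w x b hb1
      rw [← heq, recon_eq_F σ R Fs eR eF hmemF' hmemRi hmemRs w.1 x.1 a ha1]
      simp
    · exfalso
      apply hrim w x a ha1
      rw [heq, recon_eq_F σ R Fs eR eF hmemF' hmemRi hmemRs w.1 x.1 b hb1]
      simp
    · by_cases ha2 : a < σ a <;> by_cases hb2 : b < σ b
      · rw [recon_eq_R σ R Fs eR eF hmemF' hmemRi hmemRs w.1 x.1 a ha1 ha2,
          recon_eq_R σ R Fs eR eF hmemF' hmemRi hmemRs w.1 x.1 b hb1 hb2] at heq
        by_contra hab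
        have hne : eR ⟨a, hmemRi a ha1 ha2⟩ ≠ eR ⟨b, hmemRi b hb1 hb2⟩ :=
          fun h => hab (congrArg Subtype.val (eR.injective h))
        exact (w.2.2 _ _ hne).1 heq
      · exfalso
        rw [recon_eq_R σ R Fs eR eF hmemF' hmemRi hmemRs w.1 x.1 a ha1 ha2,
          recon_eq_S σ R Fs eR eF hmemF' hmemRi hmemRs w.1 x.1 b hb1 hb2] at heq
        by_cases hjj : eR ⟨a, hmemRi a ha1 ha2⟩ = eR ⟨σ b, hmemRs b hb1 hb2⟩
        · rw [hjj] at heq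
          exact w.2.1 _ (Complex.conj_eq_iff_im.mp heq.symm)
        · exact (w.2.2 _ _ hjj).2 heq
      · exfalso
        rw [recon_eq_S σ R Fs eR eF hmemF' hmemRi hmemRs w.1 x.1 a ha1 ha2,
          recon_eq_R σ R Fs eR eF hmemF' hmemRi hmemRs w.1 x.1 b hb1 hb2] at heq
        have heq' : w.1 (eR ⟨b, hmemRi b hb1 hb2⟩) =
            (starRingEnd ℂ) (w.1 (eR ⟨σ a, hmemRs a ha1 ha2⟩)) := by
          rw [← heq]
        by_cases hjj : eR ⟨b, hmemRi b hb1 hb2⟩ = eR ⟨σ a, hmemRs a ha1 ha2⟩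
        · rw [hjj] at heq'
          exact w.2.1 _ (Complex.conj_eq_iff_im.mp heq'.symm)
        · exact (w.2.2 _ _ hjj).2 heq'
      · rw [recon_eq_S σ R Fs eR eF hmemF' hmemRi hmemRs w.1 x.1 a ha1 ha2,
          recon_eq_S σ R Fs eR eF hmemF' hmemRi hmemRs w.1 x.1 b hb1 hb2] at heq
        have heq' := star_injective heq
        by_contra hab
        have hne : eR ⟨σ a, hmemRs a ha1 ha2⟩ ≠ eR ⟨σ b, hmemRs b hb1 hb2⟩ := by
          intro h
          have := congrArg Subtype.val (eR.injective h)
          exact hab (σ.injective this)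
        exact (w.2.2 _ _ hne).1 heq'
  have hZC : ∀ p : {w : Fin m → ℂ // PairCond m w} × {x : Fin k → ℝ // Function.Injective x},
      ∀ i, (starRingEnd ℂ) (recon σ R Fs eR eF hmemF' hmemRi hmemRs p.1.1 p.2.1 (σ i)) =
        recon σ R Fs eR eF hmemF' hmemRi hmemRs p.1.1 p.2.1 i := by
    rintro ⟨w, x⟩ i
    by_cases h1 : σ i = i
    · rw [h1, recon_eq_F σ R Fs eR eF hmemF' hmemRi hmemRs w.1 x.1 i h1, Complex.conj_ofReal]
    · by_cases h2 : i < σ i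
      · have h1' : σ (σ i) ≠ σ i := by rw [hσσ]; exact fun e => h1 e.symm
        have h2' : ¬ σ i < σ (σ i) := by rw [hσσ]; exact not_lt.mpr (le_of_lt h2)
        rw [recon_eq_S σ R Fs eR eF hmemF' hmemRi hmemRs w.1 x.1 (σ i) h1' h2',
          Complex.conj_conj, recon_eq_R σ R Fs eR eF hmemF' hmemRi hmemRs w.1 x.1 i h1 h2]
        simp only [hσσ]
      · have h1' : σ (σ i) ≠ σ i := by rw [hσσ]; exact fun e => h1 e.symm
        have h2' : σ i < σ (σ i) := by
          rw [hσσ]; exact lt_of_le_of_ne (not_lt.mp h2) h1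
        rw [recon_eq_R σ R Fs eR eF hmemF' hmemRi hmemRs w.1 x.1 (σ i) h1' h2',
          recon_eq_S σ R Fs eR eF hmemF' hmemRi hmemRs w.1 x.1 i h1 h2]
  refine ⟨Homeomorph.mk (Equiv.mk
    (fun z => (⟨fun j => z.1.1 (eR.symm j).1, hPC z⟩, ⟨fun j => (z.1.1 (eF.symm j).1).re, hXI z⟩))
    (fun p => ⟨⟨recon σ R Fs eR eF hmemF' hmemRi hmemRs p.1.1 p.2.1, hZI p⟩, hZC p⟩)
    ?_ ?_) ?_ ?_⟩
  · -- left inverse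
    intro z
    apply Subtype.ext
    apply Subtype.ext
    funext i
    show recon σ R Fs eR eF hmemF' hmemRi hmemRs _ _ i = z.1.1 i
    by_cases h1 : σ i = i
    · rw [recon_eq_F σ R Fs eR eF hmemF' hmemRi hmemRs _ _ i h1]
      show ((z.1.1 (eF.symm (eF ⟨i, hmemF' i h1⟩)).1).re : ℂ) = z.1.1 i
      rw [Equiv.symm_apply_apply]
      apply Complex.ext
      · simp
      · simp [hreal z i h1]
    · by_cases h2 : i < σ i
      · rw [recon_eq_R σ R Fs eR eF hmemF' hmemRi hmemRs _ _ i h1 h2]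
        show z.1.1 (eR.symm (eR ⟨i, hmemRi i h1 h2⟩)).1 = z.1.1 i
        rw [Equiv.symm_apply_apply]
      · rw [recon_eq_S σ R Fs eR eF hmemF' hmemRi hmemRs _ _ i h1 h2]
        show (starRingEnd ℂ) (z.1.1 (eR.symm (eR ⟨σ i, hmemRs i h1 h2⟩)).1) = z.1.1 i
        rw [Equiv.symm_apply_apply]
        exact z.2 i
  · -- right inverse
    rintro ⟨w, x⟩
    refine Prod.ext (Subtype.ext ?_) (Subtype.ext ?_)
    · funext j
      show recon σ R Fs eR eF hmemF' hmemRi hmemRs w.1 x.1 (eR.symm j).1 = w.1 j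
      obtain ⟨hm1, hm2⟩ := (hmemR _).mp (eR.symm j).2
      rw [recon_eq_R σ R Fs eR eF hmemF' hmemRi hmemRs w.1 x.1 _ hm1 hm2]
      congr 1
      rw [Subtype.coe_eta, Equiv.apply_symm_apply]
    · funext j
      show (recon σ R Fs eR eF hmemF' hmemRi hmemRs w.1 x.1 (eF.symm j).1).re = x.1 j
      have hm1 := (hmemFs _).mp (eF.symm j).2
      rw [recon_eq_F σ R Fs eR eF hmemF' hmemRi hmemRs w.1 x.1 _ hm1]
      rw [Complex.ofReal_re]
      congr 1
      rw [Subtype.coe_eta, Equiv.apply_symm_apply]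
  · -- continuity forward
    refine Continuous.prodMk (Continuous.subtype_mk (continuous_pi fun j => ?_) _)
      (Continuous.subtype_mk (continuous_pi fun j => ?_) _)
    · exact (continuous_apply _).comp (continuous_subtype_val.comp continuous_subtype_val)
    · exact Complex.continuous_re.comp
        ((continuous_apply _).comp (continuous_subtype_val.comp continuous_subtype_val))
  · -- continuity backward
    refine Continuous.subtype_mk (Continuous.subtype_mk (continuous_pi fun i => ?_) _) _
    simp only [recon]
    by_cases h1 : σ i = i
    · simp only [dif_pos h1]
      exact Complex.continuous_ofReal.comp
        ((continuous_apply _).comp (continuous_subtype_val.comp continuous_snd))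
    · simp only [dif_neg h1]
      by_cases h2 : i < σ i
      · simp only [dif_pos h2]
        exact (continuous_apply _).comp (continuous_subtype_val.comp continuous_fst)
      · simp only [dif_neg h2]
        exact continuous_star.comp
          ((continuous_apply _).comp (continuous_subtype_val.comp continuous_fst))

def discreteHomeo {a b c : ℕ} (e : Fin a × Fin b ≃ Fin c) : (Fin a × Fin b) ≃ₜ Fin c :=
  ⟨e, continuous_of_discreteTopology, continuous_of_discreteTopology⟩

/-- let `σ ∈ S_n` be a product of `m ≥ 1` disjoint transpositions
(an involution moving exactly `2m` points), and let `σ̄` be its action on the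
configuration space `M_n` composed with complex conjugation.  Then the fixed
point set of `σ̄` is homeomorphic to a disjoint union of finitely many copies
of `M_m × ℝ^{n−2m}`. -/
theorem stmt10 {n m : ℕ} (hm : 1 ≤ m) (σ : Equiv.Perm (Fin n))
    (hσ2 : σ * σ = 1)
    (hσm : (Finset.univ.filter fun i : Fin n => σ i ≠ i).card = 2 * m) :
    ∃ K : ℕ, 0 < K ∧
      Nonempty (({z : ConfigSpace n // ∀ i, (starRingEnd ℂ) (z.1 (σ i)) = z.1 i}) ≃ₜ
        (Fin K × (ConfigSpace m × (Fin (n - 2 * m) → ℝ)))) := by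
  have hσσ : ∀ i, σ (σ i) = i := by
    intro i
    have := congrArg (fun τ : Equiv.Perm (Fin n) => τ i) hσ2
    simpa [Equiv.Perm.mul_apply] using this
  obtain ⟨e1⟩ := step1 σ hσσ hσm
  refine ⟨2 ^ m * (n - 2 * m).factorial,
    Nat.mul_pos (Nat.pow_pos (by norm_num)) (n - 2 * m).factorial_pos, ⟨?_⟩⟩
  have e2 := (signsHomeo m).prodCongr (injHomeo (n - 2 * m))
  have e3 := Homeomorph.prodProdProdComm (Fin (2 ^ m)) {u : Fin m → ℂ // UpperCond m u}
    (Fin (n - 2 * m).factorial) {y : Fin (n - 2 * m) → ℝ // StrictMono y}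
  have e4 := (discreteHomeo (finProdFinEquiv (m := 2 ^ m) (n := (n - 2 * m).factorial))).prodCongr
    ((upperHomeo m).prodCongr (strictMonoHomeo (n - 2 * m)))
  exact e1.trans (e2.trans (e3.trans e4))
end

section
/- Let σ be a special involution in a finite Coxeter group G with eigenspace decomposition V = V₁ ⊕ V₂ (V₁ the −1-eigenspace) and associated root subsystems R₁ = R ∩ V₁, R₂ = R ∩ V₂ generating Coxeter subgroups G₁, G₂. Then the fixed point set of the map z ↦ σ(z̄) on M_G has exactly |G₁|·|G₂| connected components, each of which is contractible (an open convex cone). -/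
noncomputable section

/-- The `(−1)`-eigenspace of an isometry `σ`. -/
def minusEigenspace {n : ℕ}
    (σ : EuclideanSpace ℝ (Fin n) ≃ₗᵢ[ℝ] EuclideanSpace ℝ (Fin n)) :
    Submodule ℝ (EuclideanSpace ℝ (Fin n)) :=
  Module.End.eigenspace (σ.toLinearEquiv : EuclideanSpace ℝ (Fin n) →ₗ[ℝ] _) (-1)

/-- The `(+1)`-eigenspace of an isometry `σ`. -/
def plusEigenspace {n : ℕ}
    (σ : EuclideanSpace ℝ (Fin n) ≃ₗᵢ[ℝ] EuclideanSpace ℝ (Fin n)) :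
    Submodule ℝ (EuclideanSpace ℝ (Fin n)) :=
  Module.End.eigenspace (σ.toLinearEquiv : EuclideanSpace ℝ (Fin n) →ₗ[ℝ] _) 1

/-- The complexified action of `σ` composed with complex conjugation:
`σ̄(x + iy) = σ(x) − i σ(y)` for real vectors `x`, `y`. -/
def barAction {n : ℕ}
    (σ : EuclideanSpace ℝ (Fin n) ≃ₗᵢ[ℝ] EuclideanSpace ℝ (Fin n))
    (z : Fin n → ℂ) : Fin n → ℂ := fun i =>
  (σ ((WithLp.toLp 2 (fun j => (z j).re) : EuclideanSpace ℝ (Fin n))) i : ℝ)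
    - Complex.I * (σ ((WithLp.toLp 2 (fun j => (z j).im) : EuclideanSpace ℝ (Fin n))) i : ℝ)

open scoped RealInnerProductSpace Classical
open Finset

variable {n : ℕ}

local notation "E" => EuclideanSpace ℝ (Fin n)

/-- reflection in the hyperplane orthogonal to β -/
def sref (β : EuclideanSpace ℝ (Fin n)) : EuclideanSpace ℝ (Fin n) ≃ₗᵢ[ℝ] EuclideanSpace ℝ (Fin n) :=
  Submodule.reflection (ℝ ∙ β)ᗮ

lemma inner_self_pos' {β : E} (hβ : β ≠ 0) : 0 < ⟪β, β⟫ := by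
  rw [real_inner_self_eq_norm_sq]
  exact pow_pos (norm_pos_iff.mpr hβ) 2

lemma sref_apply {β : E} (hβ : β ≠ 0) (x : E) :
    sref β x = x - (2 * ⟪β, x⟫ / ⟪β, β⟫) • β := by
  have h2 : ((Submodule.orthogonalProjectionOnto (ℝ ∙ β) x : E)) = (⟪β, x⟫ / ⟪β, β⟫) • β := by
    rw [← Submodule.starProjection_apply, Submodule.starProjection_singleton, real_inner_self_eq_norm_sq]
    norm_num
  have h1 : ((Submodule.orthogonalProjectionOnto (ℝ ∙ β)ᗮ x : E)) = x - (⟪β, x⟫ / ⟪β, β⟫) • β := by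
    have := Submodule.starProjection_add_starProjection_orthogonal (K := ℝ ∙ β) x
    rw [Submodule.starProjection_apply, Submodule.starProjection_apply, h2] at this
    linear_combination (norm := module) this
  rw [sref, Submodule.reflection_apply, Submodule.starProjection_apply, h1]
  have : (2 * ⟪β, x⟫ / ⟪β, β⟫) = 2 * (⟪β, x⟫ / ⟪β, β⟫) := by ring
  rw [this]
  module

lemma sref_inv (β : E) : (sref β)⁻¹ = sref β := Submodule.reflection_symm

lemma sref_mul_self (β : E) : sref β * sref β = 1 := by
  conv_lhs => rw [← sref_inv β]
  exact inv_mul_cancel _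

lemma sref_self {β : E} (hβ : β ≠ 0) : sref β β = -β := by
  rw [sref_apply hβ]
  have h := (inner_self_pos' hβ).ne'
  rw [mul_div_assoc, div_self h]
  norm_num
  module

lemma sref_conj {β : E} (hβ : β ≠ 0) (w : E ≃ₗᵢ[ℝ] E) :
    sref (w β) = w * sref β * w⁻¹ := by
  apply LinearIsometryEquiv.ext
  intro y
  have hwβ : w β ≠ 0 := by
    simp only [ne_eq, EmbeddingLike.map_eq_zero_iff]; exact hβ
  have h1 : (w * sref β * w⁻¹) y = w (sref β (w.symm y)) := rfl
  rw [h1, sref_apply hwβ, sref_apply hβ, map_sub, map_smul]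
  have h2 : y = w (w.symm y) := (w.apply_symm_apply y).symm
  conv_lhs => rw [h2]
  rw [LinearIsometryEquiv.inner_map_map]
  rw [LinearIsometryEquiv.inner_map_map w β β]

lemma sref_smul {β : E} (hβ : β ≠ 0) {c : ℝ} (hc : c ≠ 0) :
    sref (c • β) = sref β := by
  apply LinearIsometryEquiv.ext
  intro x
  have hcβ : c • β ≠ 0 := smul_ne_zero hc hβ
  rw [sref_apply hcβ, sref_apply hβ]
  congr 1
  rw [smul_smul]
  congr 1
  rw [real_inner_smul_left, real_inner_smul_left, real_inner_smul_right]
  have h := (inner_self_pos' hβ).ne'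
  set A := ⟪β, x⟫ with hA
  set B := ⟪β, β⟫ with hB
  field_simp

lemma sref_neg {β : E} (hβ : β ≠ 0) : sref (-β) = sref β := by
  rw [← neg_one_smul ℝ β]
  exact sref_smul hβ (by norm_num)

/-! ### The reflection group of a finite stable root set -/

/-- the group generated by the reflections in the roots of `S` -/
def Wgrp (S : Finset (EuclideanSpace ℝ (Fin n))) :
    Subgroup (EuclideanSpace ℝ (Fin n) ≃ₗᵢ[ℝ] EuclideanSpace ℝ (Fin n)) :=
  Subgroup.closure {g | ∃ β ∈ S, g = sref β}

lemma sref_mem_Wgrp {S : Finset E} {β : E} (hβ : β ∈ S) : sref β ∈ Wgrp S :=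
  Subgroup.subset_closure ⟨β, hβ, rfl⟩

section Stable

variable {S : Finset (EuclideanSpace ℝ (Fin n))}
  (hS0 : ∀ β ∈ S, β ≠ 0)
  (hSstab : ∀ β ∈ S, ∀ γ ∈ S, sref β γ ∈ S)

include hS0 hSstab

lemma W_stab : ∀ w ∈ Wgrp S, ∀ γ ∈ S, w γ ∈ S := by
  intro w hw
  induction hw using Subgroup.closure_induction with
  | mem g hg =>
    obtain ⟨β, hβ, rfl⟩ := hg
    exact hSstab β hβ
  | one => intro γ hγ; exact hγ
  | mul x y hx hy ihx ihy =>
    intro γ hγ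
    have : (x * y) γ = x (y γ) := rfl
    rw [this]
    exact ihx _ (ihy _ hγ)
  | inv x hx ihx =>
    intro γ hγ
    have himg : S.image x = S := by
      apply Finset.eq_of_subset_of_card_le
      · intro a ha
        obtain ⟨b, hb, rfl⟩ := Finset.mem_image.mp ha
        exact ihx b hb
      · rw [Finset.card_image_of_injective _ x.injective]
    rw [← himg] at hγ
    obtain ⟨b, hb, hxb⟩ := Finset.mem_image.mp hγ
    have : x⁻¹ γ = b := by rw [← hxb]; exact x.symm_apply_apply b
    rw [this]; exact hb

lemma neg_mem_S {β : E} (hβ : β ∈ S) : -β ∈ S := by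
  have := hSstab β hβ β hβ
  rwa [sref_self (hS0 β hβ)] at this

end Stable

/-! ### Positive systems and cells -/

/-- positive roots with respect to a generic point `q` -/
def Pos (S : Finset (EuclideanSpace ℝ (Fin n))) (q : EuclideanSpace ℝ (Fin n)) :
    Finset (EuclideanSpace ℝ (Fin n)) :=
  S.filter (fun β => 0 < ⟪β, q⟫)

lemma mem_Pos {S : Finset E} {q β : E} : β ∈ Pos S q ↔ β ∈ S ∧ 0 < ⟪β, q⟫ :=
  Finset.mem_filter

lemma Pos_not_both {S : Finset E} {q β : E} (h1 : β ∈ Pos S q) (h2 : -β ∈ Pos S q) : False := by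
  have := (mem_Pos.mp h1).2
  have h3 := (mem_Pos.mp h2).2
  rw [inner_neg_left] at h3
  linarith

/-- a nonnegative combination of elements of `Δ` -/
def isPosComb (Δ : Finset (EuclideanSpace ℝ (Fin n))) (x : EuclideanSpace ℝ (Fin n)) : Prop :=
  ∃ c : EuclideanSpace ℝ (Fin n) → ℝ, (∀ γ ∈ Δ, 0 ≤ c γ) ∧ x = ∑ γ ∈ Δ, c γ • γ

/-- `Δ` is a positive generating subset of the positive system -/
def genP (S : Finset (EuclideanSpace ℝ (Fin n))) (q : EuclideanSpace ℝ (Fin n))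
    (Δ : Finset (EuclideanSpace ℝ (Fin n))) : Prop :=
  Δ ⊆ Pos S q ∧ ∀ β ∈ Pos S q, isPosComb Δ β

lemma genP_Pos (S : Finset E) (q : E) : genP S q (Pos S q) := by
  refine ⟨le_refl _, fun β hβ => ?_⟩
  refine ⟨fun γ => if γ = β then 1 else 0, fun γ _ => by positivity, ?_⟩
  simp only [ite_smul, one_smul, zero_smul]
  rw [Finset.sum_ite_eq' (Pos S q) β (fun γ => γ), if_pos hβ]

lemma exists_min_genP (S : Finset E) (q : E) :
    ∃ Δ, genP S q Δ ∧ ∀ Δ', genP S q Δ' → Δ.card ≤ Δ'.card := by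
  have hne : ∃ k, ∃ Δ, genP S q Δ ∧ Δ.card = k := ⟨_, Pos S q, genP_Pos S q, rfl⟩
  obtain ⟨Δ, hΔ, hcard⟩ := Nat.find_spec hne
  exact ⟨Δ, hΔ, fun Δ' hΔ' => by
    rw [hcard]
    exact Nat.find_min' hne ⟨Δ', hΔ', rfl⟩⟩

lemma genP_erase {S : Finset E} {q : E} {Δ : Finset E} {δ : E}
    (hΔ : genP S q Δ) (hδ : δ ∈ Δ) (h : isPosComb (Δ.erase δ) δ) :
    genP S q (Δ.erase δ) := by
  obtain ⟨d, hd0, hdeq⟩ := h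
  refine ⟨fun γ hγ => hΔ.1 (Finset.mem_of_mem_erase hγ), fun β hβ => ?_⟩
  obtain ⟨c, hc0, hceq⟩ := hΔ.2 β hβ
  refine ⟨fun γ => c γ + c δ * d γ, fun γ hγ => by
    have := hc0 γ (Finset.mem_of_mem_erase hγ)
    have := hd0 γ hγ
    have := hc0 δ hδ
    positivity, ?_⟩
  set cd := c δ with hcd
  have h1 : β = cd • δ + ∑ γ ∈ Δ.erase δ, c γ • γ := by
    rw [hceq]
    exact (Finset.add_sum_erase Δ (fun γ => c γ • γ) hδ).symm
  have h2 : cd • δ = ∑ γ ∈ Δ.erase δ, (cd * d γ) • γ := by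
    conv_lhs => rw [hdeq]
    rw [Finset.smul_sum]
    exact Finset.sum_congr rfl fun γ _ => smul_smul _ _ _
  rw [h1, h2, ← Finset.sum_add_distrib]
  exact Finset.sum_congr rfl fun γ _ => by module


lemma inner_sum_comb (Δ : Finset E) (c : E → ℝ) (q' : E) :
    ⟪∑ γ ∈ Δ, c γ • γ, q'⟫ = ∑ γ ∈ Δ, c γ * ⟪γ, q'⟫ := by
  rw [sum_inner]
  exact Finset.sum_congr rfl fun γ _ => real_inner_smul_left _ _ _

section Gen

variable {S : Finset (EuclideanSpace ℝ (Fin n))} {q : EuclideanSpace ℝ (Fin n)}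
  {Δ : Finset (EuclideanSpace ℝ (Fin n))}
  (hS0 : ∀ β ∈ S, β ≠ 0)
  (hSstab : ∀ β ∈ S, ∀ γ ∈ S, sref β γ ∈ S)
  (hq : ∀ β ∈ S, ⟪β, q⟫ ≠ 0)
  (hΔ : genP S q Δ)
  (hmin : ∀ Δ', genP S q Δ' → Δ.card ≤ Δ'.card)

include hS0 hSstab hq in
lemma Pos_dichotomy {β : E} (hβ : β ∈ S) : β ∈ Pos S q ∨ -β ∈ Pos S q := by
  rcases lt_or_gt_of_ne (hq β hβ) with h | h
  · right
    rw [mem_Pos, inner_neg_left]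
    exact ⟨neg_mem_S hS0 hSstab hβ, by linarith⟩
  · exact Or.inl (mem_Pos.mpr ⟨hβ, h⟩)

include hΔ hmin in
lemma not_posComb_erase {δ : E} (hδ : δ ∈ Δ) : ¬ isPosComb (Δ.erase δ) δ := by
  intro h
  have h1 := hmin _ (genP_erase hΔ hδ h)
  have h2 := Finset.card_erase_lt_of_mem hδ
  omega

include hS0 hSstab hq hΔ hmin in
lemma prop2 {δ β : E} (hδ : δ ∈ Δ) (hβ : β ∈ Pos S q)
    (hray : ∀ c : ℝ, β ≠ c • δ) : sref δ β ∈ Pos S q := by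
  have hδP : δ ∈ Pos S q := hΔ.1 hδ
  have hδS : δ ∈ S := (mem_Pos.mp hδP).1
  have hδq : 0 < ⟪δ, q⟫ := (mem_Pos.mp hδP).2
  have hδ0 : δ ≠ 0 := hS0 δ hδS
  have hβS : β ∈ S := (mem_Pos.mp hβ).1
  obtain ⟨a, ha0, haeq⟩ := hΔ.2 β hβ
  by_cases hall : ∀ γ ∈ Δ.erase δ, a γ = 0
  · exfalso
    have : β = a δ • δ := by
      rw [haeq, ← Finset.add_sum_erase Δ _ hδ,
        Finset.sum_eq_zero (fun γ hγ => by rw [hall γ hγ, zero_smul]), add_zero]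
    exact hray _ this
  push_neg at hall
  obtain ⟨γ₀, hγ₀e, hγ₀ne⟩ := hall
  have hγ₀Δ : γ₀ ∈ Δ := Finset.mem_of_mem_erase hγ₀e
  have haγ₀ : 0 < a γ₀ := lt_of_le_of_ne (ha0 _ hγ₀Δ) (Ne.symm hγ₀ne)
  have hsS : sref δ β ∈ S := hSstab δ hδS β hβS
  by_cases hP : sref δ β ∈ Pos S q
  · exact hP
  exfalso
  have hnegP : -(sref δ β) ∈ Pos S q := by
    rcases Pos_dichotomy hS0 hSstab hq hsS with h | h
    · exact absurd h hP
    · exact h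
  obtain ⟨b, hb0, hbeq⟩ := hΔ.2 _ hnegP
  set k := 2 * ⟪δ, β⟫ / ⟪δ, δ⟫ with hk
  have hsref : sref δ β = β - k • δ := sref_apply hδ0 β
  rw [hsref] at hbeq
  have key : k • δ = ∑ γ ∈ Δ, (a γ + b γ) • γ := by
    have hsplit : ∑ γ ∈ Δ, (a γ + b γ) • γ
        = (∑ γ ∈ Δ, a γ • γ) + (∑ γ ∈ Δ, b γ • γ) := by
      rw [← Finset.sum_add_distrib]
      exact Finset.sum_congr rfl fun γ _ => add_smul _ _ _
    rw [hsplit, ← haeq]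
    linear_combination (norm := module) hbeq
  have key2 : (k - a δ - b δ) • δ = ∑ γ ∈ Δ.erase δ, (a γ + b γ) • γ := by
    have h3 := Finset.add_sum_erase Δ (fun γ => (a γ + b γ) • γ) hδ
    rw [← key] at h3
    linear_combination (norm := module) -h3
  set m := k - a δ - b δ with hm'
  by_cases hm : 0 < m
  · apply not_posComb_erase hΔ hmin hδ
    refine ⟨fun γ => (a γ + b γ) / m, fun γ hγ => div_nonneg
      (add_nonneg (ha0 _ (Finset.mem_of_mem_erase hγ)) (hb0 _ (Finset.mem_of_mem_erase hγ)))
      hm.le, ?_⟩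
    have h5 : m⁻¹ • (m • δ) = ∑ γ ∈ Δ.erase δ, ((a γ + b γ) / m) • γ := by
      rw [key2, Finset.smul_sum]
      exact Finset.sum_congr rfl fun γ _ => by rw [smul_smul, ← div_eq_inv_mul]
    rw [← h5, smul_smul, inv_mul_cancel₀ hm.ne', one_smul]
  · have hm2 : m ≤ 0 := not_lt.mp hm
    have hL : ⟪m • δ, q⟫ ≤ 0 := by
      rw [real_inner_smul_left]
      exact mul_nonpos_of_nonpos_of_nonneg hm2 hδq.le
    have hR : 0 < ⟪∑ γ ∈ Δ.erase δ, (a γ + b γ) • γ, q⟫ := by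
      rw [inner_sum_comb]
      have hterm : 0 < (a γ₀ + b γ₀) * ⟪γ₀, q⟫ :=
        mul_pos (by have := hb0 _ hγ₀Δ; linarith) (mem_Pos.mp (hΔ.1 hγ₀Δ)).2
      calc (0:ℝ) < (a γ₀ + b γ₀) * ⟪γ₀, q⟫ := hterm
        _ ≤ ∑ γ ∈ Δ.erase δ, (a γ + b γ) * ⟪γ, q⟫ := by
          apply Finset.single_le_sum (fun γ hγ => ?_) hγ₀e
          have hγΔ := Finset.mem_of_mem_erase hγ
          exact mul_nonneg (add_nonneg (ha0 _ hγΔ) (hb0 _ hγΔ))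
            (mem_Pos.mp (hΔ.1 hγΔ)).2.le
    rw [← key2] at hR
    linarith

end Gen

/-! ### Words in simple reflections -/

def SimpleWord (Δ : Finset (EuclideanSpace ℝ (Fin n)))
    (l : List (EuclideanSpace ℝ (Fin n) ≃ₗᵢ[ℝ] EuclideanSpace ℝ (Fin n))) : Prop :=
  ∀ g ∈ l, ∃ δ ∈ Δ, g = sref δ

lemma simpleWord_nil {Δ : Finset E} : SimpleWord Δ [] := fun g hg => absurd hg (List.not_mem_nil (a := g))

lemma simpleWord_cons {Δ : Finset E} {g l} (hg : ∃ δ ∈ Δ, g = sref δ) (hl : SimpleWord Δ l) :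
    SimpleWord Δ (g :: l) := by
  intro x hx
  rcases List.mem_cons.mp hx with rfl | hx
  · exact hg
  · exact hl x hx

lemma simpleWord_append {Δ : Finset E} {l₁ l₂} (h₁ : SimpleWord Δ l₁) (h₂ : SimpleWord Δ l₂) :
    SimpleWord Δ (l₁ ++ l₂) := by
  intro x hx
  rcases List.mem_append.mp hx with hx | hx
  · exact h₁ x hx
  · exact h₂ x hx

lemma simpleWord_reverse_prod {Δ : Finset E} {l} (h : SimpleWord Δ l) :
    l.reverse.prod = l.prod⁻¹ := by
  induction l with
  | nil => simp
  | cons g t ih =>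
    obtain ⟨δ, hδ, rfl⟩ := h _ (List.mem_cons_self (a := g) (l := t))
    rw [List.reverse_cons, List.prod_append, List.prod_cons, List.prod_cons, List.prod_nil,
      mul_one, ih (fun x hx => h x (List.mem_cons_of_mem _ hx)), mul_inv_rev, sref_inv]

lemma simpleWord_prod_mem {S Δ : Finset E} (hΔS : ∀ δ ∈ Δ, δ ∈ S) {l} (h : SimpleWord Δ l) :
    l.prod ∈ Wgrp S := by
  apply Subgroup.list_prod_mem
  intro x hx
  obtain ⟨δ, hδ, rfl⟩ := h x hx
  exact sref_mem_Wgrp (hΔS δ hδ)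

section Gen2

variable {S : Finset (EuclideanSpace ℝ (Fin n))} {q : EuclideanSpace ℝ (Fin n)}
  {Δ : Finset (EuclideanSpace ℝ (Fin n))}
  (hS0 : ∀ β ∈ S, β ≠ 0)
  (hSstab : ∀ β ∈ S, ∀ γ ∈ S, sref β γ ∈ S)
  (hq : ∀ β ∈ S, ⟪β, q⟫ ≠ 0)
  (hΔ : genP S q Δ)
  (hmin : ∀ Δ', genP S q Δ' → Δ.card ≤ Δ'.card)

include hS0 hSstab hq hΔ hmin in
lemma exists_word_sref {α : E} (hα : α ∈ S) : ∃ l, SimpleWord Δ l ∧ l.prod = sref α := by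
  set O := (Pos S q).filter (fun β => ∃ u : EuclideanSpace ℝ (Fin n) ≃ₗᵢ[ℝ] EuclideanSpace ℝ (Fin n),
    (∃ l, SimpleWord Δ l ∧ l.prod = u) ∧ (u α = β ∨ u α = -β)) with hO
  have hOne : O.Nonempty := by
    rcases Pos_dichotomy hS0 hSstab hq hα with h | h
    · exact ⟨α, Finset.mem_filter.mpr ⟨h, 1, ⟨[], simpleWord_nil, rfl⟩, Or.inl rfl⟩⟩
    · exact ⟨-α, Finset.mem_filter.mpr ⟨h, 1, ⟨[], simpleWord_nil, rfl⟩, Or.inr (by simp)⟩⟩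
  obtain ⟨β₀, hβ₀O, hβ₀min⟩ := O.exists_min_image (fun β => ⟪β, q⟫) hOne
  obtain ⟨hβ₀P, u, ⟨lu, hlu, hluprod⟩, huα⟩ := Finset.mem_filter.mp hβ₀O
  have hβ₀S : β₀ ∈ S := (mem_Pos.mp hβ₀P).1
  have hβ₀0 : β₀ ≠ 0 := hS0 _ hβ₀S
  obtain ⟨a, ha0, haeq⟩ := hΔ.2 β₀ hβ₀P
  have hex : ∃ γ ∈ Δ, 0 < a γ ∧ 0 < ⟪β₀, γ⟫ := by
    by_contra hno
    push_neg at hno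
    have h1 : ⟪(∑ γ ∈ Δ, a γ • γ : EuclideanSpace ℝ (Fin n)), β₀⟫ ≤ 0 := by
      rw [sum_inner]
      apply Finset.sum_nonpos
      intro γ hγ
      rw [real_inner_smul_left]
      rcases eq_or_lt_of_le (ha0 γ hγ) with he | hlt
      · rw [← he, zero_mul]
      · have h2 := hno γ hγ hlt
        rw [real_inner_comm] at h2
        exact mul_nonpos_of_nonneg_of_nonpos hlt.le h2
    rw [← haeq] at h1
    exact absurd h1 (not_le.mpr (inner_self_pos' hβ₀0))
  obtain ⟨γ, hγΔ, haγ, hinn⟩ := hex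
  have hγP : γ ∈ Pos S q := hΔ.1 hγΔ
  have hγS : γ ∈ S := (mem_Pos.mp hγP).1
  have hγ0 : γ ≠ 0 := hS0 _ hγS
  have hγq : 0 < ⟪γ, q⟫ := (mem_Pos.mp hγP).2
  by_cases hray : ∃ c : ℝ, β₀ = c • γ
  · obtain ⟨c, hc⟩ := hray
    have hc0 : c ≠ 0 := by
      rintro rfl
      rw [zero_smul] at hc
      exact hβ₀0 hc
    have hsβ₀ : sref β₀ = sref γ := by rw [hc]; exact sref_smul hγ0 hc0
    have huinv : α = u⁻¹ β₀ ∨ α = -(u⁻¹ β₀) := by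
      rcases huα with h | h
      · left; rw [← h]; exact (u.symm_apply_apply α).symm
      · right
        have h3 : u⁻¹ (u α) = u⁻¹ (-β₀) := by rw [h]
        have h4 : u⁻¹ (u α) = α := u.symm_apply_apply α
        rw [h4] at h3
        rw [h3, map_neg]
    have hsα : sref α = sref (u⁻¹ β₀) := by
      rcases huinv with h | h
      · rw [h]
      · rw [h, sref_neg]
        simp only [ne_eq, EmbeddingLike.map_eq_zero_iff]
        exact hβ₀0
    refine ⟨lu.reverse ++ (sref γ :: lu), simpleWord_append
      (fun x hx => hlu x (List.mem_reverse.mp hx))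
      (simpleWord_cons ⟨γ, hγΔ, rfl⟩ hlu), ?_⟩
    rw [List.prod_append, List.prod_cons, simpleWord_reverse_prod hlu, hluprod]
    rw [hsα, sref_conj hβ₀0 u⁻¹, hsβ₀, inv_inv]
    group
  · push_neg at hray
    exfalso
    have hsP : sref γ β₀ ∈ Pos S q := prop2 hS0 hSstab hq hΔ hmin hγΔ hβ₀P hray
    have hlt : ⟪sref γ β₀, q⟫ < ⟪β₀, q⟫ := by
      rw [sref_apply hγ0, inner_sub_left, real_inner_smul_left]
      have hk : 0 < 2 * ⟪γ, β₀⟫ / ⟪γ, γ⟫ := by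
        apply div_pos _ (inner_self_pos' hγ0)
        rw [real_inner_comm]
        linarith
      nlinarith
    have hmem : sref γ β₀ ∈ O := by
      refine Finset.mem_filter.mpr ⟨hsP, sref γ * u, ⟨sref γ :: lu,
        simpleWord_cons ⟨γ, hγΔ, rfl⟩ hlu, by rw [List.prod_cons, hluprod]⟩, ?_⟩
      rcases huα with h | h
      · left
        have : (sref γ * u) α = sref γ (u α) := rfl
        rw [this, h]
      · right
        have : (sref γ * u) α = sref γ (u α) := rfl
        rw [this, h, map_neg]
    have := hβ₀min _ hmem
    linarith

include hS0 hSstab hq hΔ hmin in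
lemma exists_simpleWord_of_mem_W {w} (hw : w ∈ Wgrp S) :
    ∃ l, SimpleWord Δ l ∧ l.prod = w := by
  induction hw using Subgroup.closure_induction with
  | mem g hg =>
    obtain ⟨β, hβ, rfl⟩ := hg
    exact exists_word_sref hS0 hSstab hq hΔ hmin hβ
  | one => exact ⟨[], simpleWord_nil, rfl⟩
  | mul x y hx hy ihx ihy =>
    obtain ⟨l₁, h₁, rfl⟩ := ihx
    obtain ⟨l₂, h₂, rfl⟩ := ihy
    exact ⟨l₁ ++ l₂, simpleWord_append h₁ h₂, List.prod_append⟩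
  | inv x hx ihx =>
    obtain ⟨l, hl, rfl⟩ := ihx
    exact ⟨l.reverse, fun g hg => hl g (List.mem_reverse.mp hg), simpleWord_reverse_prod hl⟩

include hS0 hSstab hq hΔ hmin in
lemma deletion : ∀ l, SimpleWord Δ l → ∀ δ ∈ Δ, (-(l.prod δ)) ∈ Pos S q →
    ∃ l', SimpleWord Δ l' ∧ l'.length + 1 = l.length ∧ l'.prod = l.prod * sref δ := by
  intro l
  induction l with
  | nil =>
    intro _ δ hδ hneg
    exfalso
    rw [List.prod_nil] at hneg
    exact Pos_not_both (hΔ.1 hδ) hneg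
  | cons g t ih =>
    intro hword δ hδ hneg
    obtain ⟨δ₁, hδ₁Δ, rfl⟩ := hword g (List.mem_cons_self (a := g) (l := t))
    have htword : SimpleWord Δ t := fun x hx => hword x (List.mem_cons_of_mem _ hx)
    have hδ₁S : δ₁ ∈ S := (mem_Pos.mp (hΔ.1 hδ₁Δ)).1
    have hδ₁0 : δ₁ ≠ 0 := hS0 _ hδ₁S
    have hδS : δ ∈ S := (mem_Pos.mp (hΔ.1 hδ)).1
    have hδ0 : δ ≠ 0 := hS0 _ hδS
    by_cases hc : (-(t.prod δ)) ∈ Pos S q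
    · obtain ⟨t', ht'w, ht'len, ht'prod⟩ := ih htword δ hδ hc
      refine ⟨sref δ₁ :: t', simpleWord_cons ⟨δ₁, hδ₁Δ, rfl⟩ ht'w, ?_, ?_⟩
      · simp only [List.length_cons]
        omega
      · rw [List.prod_cons, List.prod_cons, ht'prod, mul_assoc]
    · have huδS : t.prod δ ∈ S :=
        W_stab hS0 hSstab _ (simpleWord_prod_mem (fun x hx => (mem_Pos.mp (hΔ.1 hx)).1) htword)
          δ hδS
      have huδP : t.prod δ ∈ Pos S q := by
        rcases Pos_dichotomy hS0 hSstab hq huδS with h | h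
        · exact h
        · exact absurd h hc
      have hsneg : (-(sref δ₁ (t.prod δ))) ∈ Pos S q := by
        have : (sref δ₁ :: t).prod δ = sref δ₁ (t.prod δ) := by rw [List.prod_cons]; rfl
        rwa [this] at hneg
      have hray : ∃ c : ℝ, t.prod δ = c • δ₁ := by
        by_contra hnoray
        push_neg at hnoray
        have := prop2 hS0 hSstab hq hΔ hmin hδ₁Δ huδP hnoray
        exact Pos_not_both this hsneg
      obtain ⟨c, hceq⟩ := hray
      have hc0 : c ≠ 0 := by
        rintro rfl
        rw [zero_smul] at hceq
        have : (δ : E) ≠ 0 := hδ0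
        have h0 : t.prod δ ≠ 0 := by
          simp only [ne_eq, EmbeddingLike.map_eq_zero_iff]
          exact hδ0
        exact h0 hceq
      have hconj : sref (t.prod δ) = t.prod * sref δ * (t.prod)⁻¹ := sref_conj hδ0 t.prod
      have heq : sref δ₁ = t.prod * sref δ * (t.prod)⁻¹ := by
        rw [← hconj, hceq, sref_smul hδ₁0 hc0]
      refine ⟨t, htword, by simp, ?_⟩
      rw [List.prod_cons, mul_assoc]
      have : t.prod * sref δ = sref δ₁ * t.prod := by
        rw [heq]
        group
      rw [this, ← mul_assoc, sref_mul_self, one_mul]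

end Gen2

lemma inv_apply_apply' (u : E ≃ₗᵢ[ℝ] E) (x : E) : u⁻¹ (u x) = x := u.symm_apply_apply x
lemma apply_inv_apply' (u : E ≃ₗᵢ[ℝ] E) (x : E) : u (u⁻¹ x) = x := u.apply_symm_apply x

lemma inner_inv_left (u : E ≃ₗᵢ[ℝ] E) (β y : E) : ⟪β, u⁻¹ y⟫ = ⟪u β, y⟫ := by
  have h := u.inner_map_map β (u⁻¹ y)
  rw [apply_inv_apply'] at h
  exact h.symm

lemma inner_apply_right (u : E ≃ₗᵢ[ℝ] E) (β y : E) : ⟪β, u y⟫ = ⟪u⁻¹ β, y⟫ := by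
  have h := u.inner_map_map (u⁻¹ β) y
  rw [apply_inv_apply'] at h
  exact h

lemma sign_trans {a b c : ℝ} (h1 : 0 < a * b) (h2 : 0 < b * c) : 0 < a * c := by
  nlinarith [mul_pos h1 h2, sq_nonneg b, sq_nonneg (a*c)]

section Free

variable {S : Finset (EuclideanSpace ℝ (Fin n))}
  (hS0 : ∀ β ∈ S, β ≠ 0)
  (hSstab : ∀ β ∈ S, ∀ γ ∈ S, sref β γ ∈ S)

include hS0 hSstab in
lemma free_thm {q : EuclideanSpace ℝ (Fin n)} (hq : ∀ β ∈ S, ⟪β, q⟫ ≠ 0) :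
    ∀ w ∈ Wgrp S, w q = q → w = 1 := by
  obtain ⟨Δ, hΔ, hmin⟩ := exists_min_genP S q
  intro w hw hwq
  have hpres : ∀ β ∈ Pos S q, w β ∈ Pos S q := by
    intro β hβ
    obtain ⟨hβS, hβq⟩ := mem_Pos.mp hβ
    refine mem_Pos.mpr ⟨W_stab hS0 hSstab w hw β hβS, ?_⟩
    have h1 : ⟪w β, q⟫ = ⟪β, q⟫ := by
      conv_lhs => rw [← hwq]
      exact w.inner_map_map β q
    rw [h1]; exact hβq
  have hex : ∃ k, ∃ l, SimpleWord Δ l ∧ l.prod = w ∧ l.length = k := by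
    obtain ⟨l, hl, hp⟩ := exists_simpleWord_of_mem_W hS0 hSstab hq hΔ hmin hw
    exact ⟨l.length, l, hl, hp, rfl⟩
  obtain ⟨l, hlw, hlp, hlen⟩ := Nat.find_spec hex
  by_contra hne1
  have hlne : l ≠ [] := by
    rintro rfl
    rw [List.prod_nil] at hlp
    exact hne1 hlp.symm
  obtain ⟨t, g, rfl⟩ : ∃ t g, l = t ++ [g] := by
    rcases List.eq_nil_or_concat' l with h | ⟨t, g, h⟩
    · exact absurd h hlne
    · exact ⟨t, g, h⟩
  have hg : g ∈ t ++ [g] := by simp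
  obtain ⟨δ, hδΔ, hgeq⟩ := hlw g hg
  subst hgeq
  have hδP : δ ∈ Pos S q := hΔ.1 hδΔ
  have hδS : δ ∈ S := (mem_Pos.mp hδP).1
  have hδ0 : δ ≠ 0 := hS0 _ hδS
  have hprod : w = t.prod * sref δ := by
    rw [← hlp, List.prod_append, List.prod_cons, List.prod_nil, mul_one]
  have hwδP : w δ ∈ Pos S q := hpres δ hδP
  have huδ : w δ = -(t.prod δ) := by
    rw [hprod]
    have h5 : (t.prod * sref δ) δ = t.prod (sref δ δ) := rfl
    rw [h5, sref_self hδ0, map_neg]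
  have htword : SimpleWord Δ t := fun x hx => hlw x (List.mem_append_left _ hx)
  obtain ⟨t', ht'w, ht'len, ht'prod⟩ :=
    deletion hS0 hSstab hq hΔ hmin t htword δ hδΔ (by rw [← huδ]; exact hwδP)
  have ht'p : t'.prod = w := by rw [ht'prod, ← hprod]
  have hlenlt : t'.length < Nat.find hex := by
    have h6 : (t ++ [sref δ]).length = t.length + 1 := by simp
    rw [h6] at hlen
    omega
  exact absurd ⟨t', ht'w, ht'p, rfl⟩ (Nat.find_min hex hlenlt)

end Free

section Main

variable {S : Finset (EuclideanSpace ℝ (Fin n))}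
  (hS0 : ∀ β ∈ S, β ≠ 0)
  (hSstab : ∀ β ∈ S, ∀ γ ∈ S, sref β γ ∈ S)

include hS0 hSstab in
lemma cell_step {q₀ : EuclideanSpace ℝ (Fin n)} {u : EuclideanSpace ℝ (Fin n) ≃ₗᵢ[ℝ] EuclideanSpace ℝ (Fin n)}
    (huW : u ∈ Wgrp S) (hu : ∀ β ∈ S, 0 < ⟪β, u q₀⟫ * ⟪β, q₀⟫) {x : EuclideanSpace ℝ (Fin n)}
    (hx : ∀ β ∈ S, 0 < ⟪β, x⟫ * ⟪β, q₀⟫) : ∀ β ∈ S, 0 < ⟪β, u x⟫ * ⟪β, q₀⟫ := by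
  intro β hβ
  have hβ' : u⁻¹ β ∈ S := W_stab hS0 hSstab u⁻¹ (inv_mem huW) β hβ
  rw [inner_apply_right]
  have h1 : 0 < ⟪u⁻¹ β, x⟫ * ⟪u⁻¹ β, q₀⟫ := hx _ hβ'
  have h2 : 0 < ⟪u⁻¹ β, q₀⟫ * ⟪β, q₀⟫ := by
    have h3 := hu β hβ
    rwa [inner_apply_right] at h3
  exact sign_trans h1 h2

include hS0 hSstab in
lemma cell_pow {q₀ : EuclideanSpace ℝ (Fin n)} (hq₀ : ∀ β ∈ S, ⟪β, q₀⟫ ≠ 0)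
    {u : EuclideanSpace ℝ (Fin n) ≃ₗᵢ[ℝ] EuclideanSpace ℝ (Fin n)}
    (huW : u ∈ Wgrp S) (hu : ∀ β ∈ S, 0 < ⟪β, u q₀⟫ * ⟪β, q₀⟫) :
    ∀ k : ℕ, ∀ β ∈ S, 0 < ⟪β, (u ^ k) q₀⟫ * ⟪β, q₀⟫ := by
  intro k
  induction k with
  | zero =>
    intro β hβ
    have : (u ^ 0) q₀ = q₀ := by rw [pow_zero]; rfl
    rw [this]
    exact mul_self_pos.mpr (hq₀ β hβ)
  | succ k ih =>
    have h1 : u ^ (k + 1) = u * u ^ k := by rw [pow_succ']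
    intro β hβ
    have h2 : (u ^ (k+1)) q₀ = u ((u ^ k) q₀) := by rw [h1]; rfl
    rw [h2]
    exact cell_step hS0 hSstab huW hu ih β hβ

include hS0 hSstab in
lemma inj_thm [Finite ↥(Wgrp S)] {q₀ : EuclideanSpace ℝ (Fin n)}
    (hq₀ : ∀ β ∈ S, ⟪β, q₀⟫ ≠ 0)
    {w w' : EuclideanSpace ℝ (Fin n) ≃ₗᵢ[ℝ] EuclideanSpace ℝ (Fin n)}
    (hwW : w ∈ Wgrp S) (hw'W : w' ∈ Wgrp S)
    (h : ∀ β ∈ S, 0 < ⟪β, w q₀⟫ * ⟪β, w' q₀⟫) : w = w' := by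
  set u := w'⁻¹ * w with hu
  have huW : u ∈ Wgrp S := mul_mem (inv_mem hw'W) hwW
  have hucell : ∀ β ∈ S, 0 < ⟪β, u q₀⟫ * ⟪β, q₀⟫ := by
    intro β hβ
    have h1 : u q₀ = w'⁻¹ (w q₀) := rfl
    rw [h1, inner_inv_left]
    have h2 : ⟪w' β, w' q₀⟫ = ⟪β, q₀⟫ := w'.inner_map_map β q₀
    rw [← h2]
    exact h _ (W_stab hS0 hSstab w' hw'W β hβ)
  set N := Nat.card ↥(Wgrp S) with hN
  have hNpos : 0 < N := Nat.card_pos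
  have huN : u ^ N = 1 := by
    have h1 : (⟨u, huW⟩ : ↥(Wgrp S)) ^ N = 1 := pow_card_eq_one'
    have h2 : (((⟨u, huW⟩ : ↥(Wgrp S)) ^ N : ↥(Wgrp S)) : EuclideanSpace ℝ (Fin n) ≃ₗᵢ[ℝ] EuclideanSpace ℝ (Fin n)) = u ^ N :=
      SubgroupClass.coe_pow _ _
    rw [h1] at h2
    exact h2.symm
  set qs : EuclideanSpace ℝ (Fin n) := (N : ℝ)⁻¹ • ∑ k ∈ Finset.range N, (u ^ k) q₀ with hqs
  have hfix : u qs = qs := by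
    rw [hqs, map_smul, map_sum]
    congr 1
    have h3 : ∀ k, u ((u ^ k) q₀) = (u ^ (k+1)) q₀ := by
      intro k
      rw [pow_succ']
      rfl
    have h4 : ∑ k ∈ Finset.range N, u ((u ^ k) q₀) = ∑ k ∈ Finset.range N, (u ^ (k+1)) q₀ :=
      Finset.sum_congr rfl fun k _ => h3 k
    rw [h4]
    have h5 := Finset.sum_range_succ (fun k => (u ^ k) q₀) N
    have h6 := Finset.sum_range_succ' (fun k => (u ^ k) q₀) N
    rw [h5] at h6
    have h7 : (u ^ N) q₀ = q₀ := by rw [huN]; rfl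
    have h8 : (u ^ 0) q₀ = q₀ := by rw [pow_zero]; rfl
    rw [h7, h8] at h6
    exact add_right_cancel h6.symm
  have hqscell : ∀ β ∈ S, 0 < ⟪β, qs⟫ * ⟪β, q₀⟫ := by
    intro β hβ
    rw [hqs, real_inner_smul_right, inner_sum, mul_assoc, Finset.sum_mul]
    apply mul_pos (by positivity)
    apply Finset.sum_pos (fun k _ => cell_pow hS0 hSstab hq₀ huW hucell k β hβ)
    exact Finset.nonempty_range_iff.mpr hNpos.ne'
  have hqs0 : ∀ β ∈ S, ⟪β, qs⟫ ≠ 0 := by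
    intro β hβ h0
    have := hqscell β hβ
    rw [h0, zero_mul] at this
    exact lt_irrefl 0 this
  have hu1 : u = 1 := free_thm hS0 hSstab hqs0 u huW hfix
  have : w'⁻¹ * w = 1 := hu1
  exact (inv_mul_eq_one.mp this).symm

lemma sref_dist_sq {β : E} (hβ : β ≠ 0) (x y : E) :
    ‖sref β x - y‖ ^ 2 = ‖x - y‖ ^ 2 + 4 * ⟪β, x⟫ * ⟪β, y⟫ / ⟪β, β⟫ := by
  rw [sref_apply hβ]
  set k := 2 * ⟪β, x⟫ / ⟪β, β⟫ with hk
  have h1 : x - k • β - y = (x - y) - k • β := by module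
  rw [h1, norm_sub_sq_real]
  have h2 : ⟪x - y, k • β⟫ = k * (⟪β, x⟫ - ⟪β, y⟫) := by
    rw [real_inner_smul_right, inner_sub_left, real_inner_comm x β, real_inner_comm y β]
  have h3 : ‖k • β‖ ^ 2 = k ^ 2 * ⟪β, β⟫ := by
    rw [norm_smul, mul_pow, real_inner_self_eq_norm_sq, Real.norm_eq_abs, sq_abs]
  rw [h2, h3, hk]
  have h4 := (inner_self_pos' hβ).ne'
  set A := ⟪β, x⟫ with hA
  set B := ⟪β, β⟫ with hB
  set C := ⟪β, y⟫ with hC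
  field_simp
  ring

include hS0 hSstab in
lemma trans_thm [Finite ↥(Wgrp S)] {q q' : EuclideanSpace ℝ (Fin n)}
    (hq : ∀ β ∈ S, ⟪β, q⟫ ≠ 0) (hq' : ∀ β ∈ S, ⟪β, q'⟫ ≠ 0) :
    ∃ w ∈ Wgrp S, ∀ β ∈ S, 0 < ⟪β, w q'⟫ * ⟪β, q⟫ := by
  haveI : Nonempty ↥(Wgrp S) := ⟨1⟩
  obtain ⟨w₀, hw₀⟩ := Finite.exists_min
    (fun v : ↥(Wgrp S) => ‖(v : EuclideanSpace ℝ (Fin n) ≃ₗᵢ[ℝ] EuclideanSpace ℝ (Fin n)) q' - q‖ ^ 2)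
  refine ⟨w₀, w₀.2, ?_⟩
  intro β hβ
  by_contra hnot
  have h1 : ⟪β, (w₀ : EuclideanSpace ℝ (Fin n) ≃ₗᵢ[ℝ] EuclideanSpace ℝ (Fin n)) q'⟫ ≠ 0 := by
    rw [inner_apply_right]
    exact hq' _ (W_stab hS0 hSstab _ (inv_mem w₀.2) β hβ)
  have h2 : ⟪β, q⟫ ≠ 0 := hq β hβ
  have h3 : ⟪β, (w₀ : EuclideanSpace ℝ (Fin n) ≃ₗᵢ[ℝ] EuclideanSpace ℝ (Fin n)) q'⟫ * ⟪β, q⟫ < 0 :=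
    lt_of_le_of_ne (not_lt.mp hnot) (mul_ne_zero h1 h2)
  set v : ↥(Wgrp S) := ⟨sref β * (w₀ : EuclideanSpace ℝ (Fin n) ≃ₗᵢ[ℝ] EuclideanSpace ℝ (Fin n)),
    mul_mem (sref_mem_Wgrp hβ) w₀.2⟩ with hv
  have hvlt : ‖(v : EuclideanSpace ℝ (Fin n) ≃ₗᵢ[ℝ] EuclideanSpace ℝ (Fin n)) q' - q‖ ^ 2
      < ‖(w₀ : EuclideanSpace ℝ (Fin n) ≃ₗᵢ[ℝ] EuclideanSpace ℝ (Fin n)) q' - q‖ ^ 2 := by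
    have h5 : (v : EuclideanSpace ℝ (Fin n) ≃ₗᵢ[ℝ] EuclideanSpace ℝ (Fin n)) q'
        = sref β ((w₀ : EuclideanSpace ℝ (Fin n) ≃ₗᵢ[ℝ] EuclideanSpace ℝ (Fin n)) q') := rfl
    rw [h5, sref_dist_sq (hS0 β hβ)]
    have hpos := inner_self_pos' (hS0 β hβ)
    have h6 : 4 * ⟪β, (w₀ : EuclideanSpace ℝ (Fin n) ≃ₗᵢ[ℝ] EuclideanSpace ℝ (Fin n)) q'⟫ * ⟪β, q⟫ / ⟪β, β⟫ < 0 := by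
      apply div_neg_of_neg_of_pos _ hpos
      nlinarith
    linarith
  exact absurd (hw₀ v) (not_le.mpr hvlt)

end Main

/-! ### Application: eigenspaces of an involution -/

section Eigen

variable {σ : EuclideanSpace ℝ (Fin n) ≃ₗᵢ[ℝ] EuclideanSpace ℝ (Fin n)}

lemma mem_plusE {x : E} : x ∈ plusEigenspace σ ↔ σ x = x := by
  rw [plusEigenspace, Module.End.mem_eigenspace_iff, one_smul]
  rfl

lemma mem_minusE {x : E} : x ∈ minusEigenspace σ ↔ σ x = -x := by
  rw [minusEigenspace, Module.End.mem_eigenspace_iff, neg_one_smul]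
  rfl

variable (hσ2 : σ * σ = 1)

include hσ2 in
lemma sigma_sigma (x : E) : σ (σ x) = x := by
  have h : (σ * σ) x = (1 : EuclideanSpace ℝ (Fin n) ≃ₗᵢ[ℝ] EuclideanSpace ℝ (Fin n)) x := by
    rw [hσ2]
  exact h

include hσ2 in
lemma half_add_mem (x : E) : ((1:ℝ)/2) • (x + σ x) ∈ plusEigenspace σ := by
  rw [mem_plusE, map_smul, map_add, sigma_sigma hσ2]
  congr 1
  abel

include hσ2 in
lemma half_sub_mem (x : E) : ((1:ℝ)/2) • (x - σ x) ∈ minusEigenspace σ := by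
  rw [mem_minusE, map_smul, map_sub, sigma_sigma hσ2, ← smul_neg]
  congr 1
  abel

lemma orth_pm {u v : E} (hu : u ∈ plusEigenspace σ) (hv : v ∈ minusEigenspace σ) :
    ⟪u, v⟫ = 0 := by
  have h := σ.inner_map_map u v
  rw [mem_plusE.mp hu, mem_minusE.mp hv, inner_neg_right] at h
  linarith

include hσ2 in
lemma proj_plusE (α : E) :
    (Submodule.orthogonalProjectionOnto (plusEigenspace σ) α : E) = ((1:ℝ)/2) • (α + σ α) := by
  rw [← Submodule.starProjection_apply]
  apply Submodule.eq_starProjection_of_mem_of_inner_eq_zero (half_add_mem hσ2 α)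
  intro w hw
  have h1 : α - ((1:ℝ)/2) • (α + σ α) = ((1:ℝ)/2) • (α - σ α) := by module
  rw [h1, real_inner_comm]
  exact orth_pm hw (half_sub_mem hσ2 α)

include hσ2 in
lemma proj_minusE (α : E) :
    (Submodule.orthogonalProjectionOnto (minusEigenspace σ) α : E) = ((1:ℝ)/2) • (α - σ α) := by
  rw [← Submodule.starProjection_apply]
  apply Submodule.eq_starProjection_of_mem_of_inner_eq_zero (half_sub_mem hσ2 α)
  intro w hw
  have h1 : α - ((1:ℝ)/2) • (α - σ α) = ((1:ℝ)/2) • (α + σ α) := by module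
  rw [h1]
  exact orth_pm (half_add_mem hσ2 α) hw

include hσ2 in
lemma inner_proj_plusE {α x : E} (hx : x ∈ plusEigenspace σ) :
    ⟪α, x⟫ = ⟪(Submodule.orthogonalProjectionOnto (plusEigenspace σ) α : E), x⟫ := by
  have h1 : α - (Submodule.orthogonalProjectionOnto (plusEigenspace σ) α : E) ∈ minusEigenspace σ := by
    rw [proj_plusE hσ2]
    have h2 : α - ((1:ℝ)/2) • (α + σ α) = ((1:ℝ)/2) • (α - σ α) := by module
    rw [h2]
    exact half_sub_mem hσ2 α
  have h3 : ⟪α - (Submodule.orthogonalProjectionOnto (plusEigenspace σ) α : E), x⟫ = 0 := by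
    rw [real_inner_comm]
    exact orth_pm hx h1
  rw [inner_sub_left] at h3
  linarith

include hσ2 in
lemma inner_proj_minusE {α x : E} (hx : x ∈ minusEigenspace σ) :
    ⟪α, x⟫ = ⟪(Submodule.orthogonalProjectionOnto (minusEigenspace σ) α : E), x⟫ := by
  have h1 : α - (Submodule.orthogonalProjectionOnto (minusEigenspace σ) α : E) ∈ plusEigenspace σ := by
    rw [proj_minusE hσ2]
    have h2 : α - ((1:ℝ)/2) • (α - σ α) = ((1:ℝ)/2) • (α + σ α) := by module
    rw [h2]
    exact half_add_mem hσ2 α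
  have h3 : ⟪α - (Submodule.orthogonalProjectionOnto (minusEigenspace σ) α : E), x⟫ = 0 :=
    orth_pm h1 hx
  rw [inner_sub_left] at h3
  linarith

include hσ2 in
lemma proj_plusE_zero {α : E}
    (h : (Submodule.orthogonalProjectionOnto (plusEigenspace σ) α : E) = 0) : α ∈ minusEigenspace σ := by
  rw [proj_plusE hσ2] at h
  rw [smul_eq_zero] at h
  rcases h with h | h
  · norm_num at h
  · rw [mem_minusE]
    have : σ α = -α := by
      have h2 := congrArg (fun y => σ α + (-1:ℝ) • y) h
      simp at h2
      linear_combination (norm := module) h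
    exact this

include hσ2 in
lemma proj_minusE_zero {α : E}
    (h : (Submodule.orthogonalProjectionOnto (minusEigenspace σ) α : E) = 0) : α ∈ plusEigenspace σ := by
  rw [proj_minusE hσ2] at h
  rw [smul_eq_zero] at h
  rcases h with h | h
  · norm_num at h
  · rw [mem_plusE]
    linear_combination (norm := module) -h

end Eigen

/-! ### Real and imaginary parts -/

def Rz (z : Fin n → ℂ) : EuclideanSpace ℝ (Fin n) := WithLp.toLp 2 (fun j => (z j).re)
def Iz (z : Fin n → ℂ) : EuclideanSpace ℝ (Fin n) := WithLp.toLp 2 (fun j => (z j).im)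

lemma inner_euclidean (x y : E) : ⟪x, y⟫ = ∑ i, x i * y i := by
  rw [PiLp.inner_apply]
  exact Finset.sum_congr rfl fun i _ => by simp [mul_comm]

lemma sum_root_eq (α : E) (z : Fin n → ℂ) :
    (∑ i, (α i : ℂ) * z i) = (⟪α, Rz z⟫ : ℝ) + (⟪α, Iz z⟫ : ℝ) * Complex.I := by
  rw [inner_euclidean, inner_euclidean]
  apply Complex.ext
  · rw [Complex.re_sum]
    push_cast
    simp [Complex.mul_re, Rz]
  · rw [Complex.im_sum]
    push_cast
    simp [Complex.mul_im, Iz]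

lemma barAction_fixed_iff (σ : EuclideanSpace ℝ (Fin n) ≃ₗᵢ[ℝ] EuclideanSpace ℝ (Fin n))
    (z : Fin n → ℂ) : barAction σ z = z ↔ σ (Rz z) = Rz z ∧ σ (Iz z) = -(Iz z) := by
  constructor
  · intro h
    constructor
    · ext i
      have hi := congrFun h i
      rw [barAction] at hi
      have := congrArg Complex.re hi
      simpa [Rz] using this
    · ext i
      have hi := congrFun h i
      rw [barAction] at hi
      have := congrArg Complex.im hi
      have h2 : -(σ (Iz z) i) = (z i).im := by simpa [Iz] using this
      simp only [PiLp.neg_apply]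
      have h3 : σ (Iz z) i = -((z i).im) := by linarith
      exact h3
  · rintro ⟨h1, h2⟩
    funext i
    rw [barAction]
    have hr : σ ((WithLp.toLp 2 (fun j => (z j).re) : EuclideanSpace ℝ (Fin n))) i = (z i).re := by
      have : (WithLp.toLp 2 (fun j => (z j).re) : EuclideanSpace ℝ (Fin n)) = Rz z := rfl
      rw [this, h1]; rfl
    have him : σ ((WithLp.toLp 2 (fun j => (z j).im) : EuclideanSpace ℝ (Fin n))) i = -(z i).im := by
      have : (WithLp.toLp 2 (fun j => (z j).im) : EuclideanSpace ℝ (Fin n)) = Iz z := rfl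
      rw [this, h2]
      simp [Iz]
    rw [hr, him]
    apply Complex.ext <;> simp

/-! ### Existence of generic points -/

lemma exists_generic (V : Submodule ℝ (EuclideanSpace ℝ (Fin n)))
    (T : Finset (EuclideanSpace ℝ (Fin n))) (hT : ∀ β ∈ T, β ∈ V ∧ β ≠ 0) :
    ∃ q ∈ V, ∀ β ∈ T, ⟪β, q⟫ ≠ 0 := by
  classical
  induction T using Finset.induction with
  | empty => exact ⟨0, V.zero_mem, fun β hβ => absurd hβ (Finset.notMem_empty β)⟩
  | @insert β s hβs ih =>
    obtain ⟨q, hqV, hq⟩ := ih (fun γ hγ => hT γ (Finset.mem_insert_of_mem hγ))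
    obtain ⟨hβV, hβ0⟩ := hT β (Finset.mem_insert_self β s)
    set bad : Finset ℝ := insert 0 (s.image (fun γ => -⟪γ, q⟫ / ⟪γ, β⟫)) with hbad
    obtain ⟨t, ht⟩ := Infinite.exists_notMem_finset bad
    have ht0 : t ≠ 0 := fun h => ht (h ▸ Finset.mem_insert_self 0 _)
    by_cases hcase : ⟪β, q⟫ ≠ 0
    · refine ⟨q, hqV, fun γ hγ => ?_⟩
      rcases Finset.mem_insert.mp hγ with rfl | hγ
      · exact hcase
      · exact hq γ hγ
    · push_neg at hcase
      refine ⟨q + t • β, V.add_mem hqV (V.smul_mem t hβV), fun γ hγ => ?_⟩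
      have hexp : ⟪γ, q + t • β⟫ = ⟪γ, q⟫ + t * ⟪γ, β⟫ := by
        rw [inner_add_right, real_inner_smul_right]
      rcases Finset.mem_insert.mp hγ with rfl | hγ
      · rw [hexp, hcase, real_inner_comm] at *
        rw [zero_add]
        exact mul_ne_zero ht0 (inner_self_pos' hβ0).ne'
      · rw [hexp]
        by_cases hγβ : ⟪γ, β⟫ = 0
        · rw [hγβ, mul_zero, add_zero]
          exact hq γ hγ
        · intro habs
          apply ht
          rw [hbad]
          apply Finset.mem_insert_of_mem
          apply Finset.mem_image.mpr
          refine ⟨γ, hγ, ?_⟩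
          show -⟪γ, q⟫ / ⟪γ, β⟫ = t
          have h7 : -⟪γ, q⟫ = t * ⟪γ, β⟫ := by linarith
          rw [h7, mul_div_assoc, div_self hγβ, mul_one]

/-! ### subspace preservation -/

lemma Wgrp_preserves (S : Finset (EuclideanSpace ℝ (Fin n)))
    (hS0 : ∀ β ∈ S, β ≠ 0)
    (V : Submodule ℝ (EuclideanSpace ℝ (Fin n))) (hSV : ∀ β ∈ S, β ∈ V) :
    ∀ w ∈ Wgrp S, (∀ x ∈ V, w x ∈ V) ∧ (∀ x ∈ V, w⁻¹ x ∈ V) := by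
  intro w hw
  induction hw using Subgroup.closure_induction with
  | mem g hg =>
    obtain ⟨β, hβ, rfl⟩ := hg
    have hmap : ∀ x ∈ V, sref β x ∈ V := by
      intro x hx
      rw [sref_apply (hS0 β hβ)]
      exact V.sub_mem hx (V.smul_mem _ (hSV β hβ))
    refine ⟨hmap, ?_⟩
    rw [sref_inv]
    exact hmap
  | one => exact ⟨fun x hx => hx, fun x hx => hx⟩
  | mul x y hx hy ihx ihy =>
    constructor
    · intro v hv
      have : (x * y) v = x (y v) := rfl
      rw [this]
      exact ihx.1 _ (ihy.1 _ hv)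
    · intro v hv
      have : (x * y)⁻¹ v = y⁻¹ (x⁻¹ v) := by
        rw [mul_inv_rev]
        rfl
      rw [this]
      exact ihy.2 _ (ihx.2 _ hv)
  | inv x hx ihx =>
    refine ⟨ihx.2, ?_⟩
    rw [inv_inv]
    exact ihx.1

/-! ### Cells of the fixed-point set -/

section Cells

variable (σ : EuclideanSpace ℝ (Fin n) ≃ₗᵢ[ℝ] EuclideanSpace ℝ (Fin n))
  (R₁ R₂ : Finset (EuclideanSpace ℝ (Fin n)))

def cellF (z : Fin n → ℂ) : Set (Fin n → ℂ) :=
  {z' | Rz z' ∈ plusEigenspace σ ∧ Iz z' ∈ minusEigenspace σ ∧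
    (∀ β ∈ R₂, 0 < ⟪β, Rz z'⟫ * ⟪β, Rz z⟫) ∧ (∀ β ∈ R₁, 0 < ⟪β, Iz z'⟫ * ⟪β, Iz z⟫)}

variable {F : Set (Fin n → ℂ)}
  (hFc : ∀ z, z ∈ F ↔ (Rz z ∈ plusEigenspace σ ∧ Iz z ∈ minusEigenspace σ ∧
    (∀ β ∈ R₂, ⟪β, Rz z⟫ ≠ 0) ∧ (∀ β ∈ R₁, ⟪β, Iz z⟫ ≠ 0)))

lemma pos_ne_zero {a b : ℝ} (h : 0 < a * b) : a ≠ 0 := by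
  intro h0
  rw [h0, zero_mul] at h
  exact lt_irrefl 0 h

include hFc in
lemma cell_subset_F (z : Fin n → ℂ) : cellF σ R₁ R₂ z ⊆ F := by
  rintro z' ⟨h1, h2, h3, h4⟩
  exact (hFc z').mpr ⟨h1, h2, fun β hβ => pos_ne_zero (h3 β hβ),
    fun β hβ => pos_ne_zero (h4 β hβ)⟩

include hFc in
lemma mem_cell_self {z : Fin n → ℂ} (hz : z ∈ F) : z ∈ cellF σ R₁ R₂ z := by
  obtain ⟨h1, h2, h3, h4⟩ := (hFc z).mp hz
  exact ⟨h1, h2, fun β hβ => mul_self_pos.mpr (h3 β hβ),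
    fun β hβ => mul_self_pos.mpr (h4 β hβ)⟩

lemma Rz_comb (a b : ℝ) (z₁ z₂ : Fin n → ℂ) :
    Rz (a • z₁ + b • z₂) = a • Rz z₁ + b • Rz z₂ := by
  ext j
  show ((a • z₁ + b • z₂) j).re = (a • Rz z₁ + b • Rz z₂) j
  have h1 : (a • z₁ + b • z₂) j = a • (z₁ j) + b • (z₂ j) := rfl
  rw [h1]
  have h2 : (a • Rz z₁ + b • Rz z₂) j = a * Rz z₁ j + b * Rz z₂ j := rfl
  rw [h2]
  simp [Complex.add_re, Complex.smul_re, Rz]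

lemma Iz_comb (a b : ℝ) (z₁ z₂ : Fin n → ℂ) :
    Iz (a • z₁ + b • z₂) = a • Iz z₁ + b • Iz z₂ := by
  ext j
  show ((a • z₁ + b • z₂) j).im = (a • Iz z₁ + b • Iz z₂) j
  have h1 : (a • z₁ + b • z₂) j = a • (z₁ j) + b • (z₂ j) := rfl
  rw [h1]
  have h2 : (a • Iz z₁ + b • Iz z₂) j = a * Iz z₁ j + b * Iz z₂ j := rfl
  rw [h2]
  simp [Complex.add_im, Complex.smul_im, Iz]

lemma comb_pos {x y c a b : ℝ} (hx : 0 < x * c) (hy : 0 < y * c) (ha : 0 ≤ a) (hb : 0 ≤ b)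
    (hab : a + b = 1) : 0 < (a * x + b * y) * c := by
  rcases eq_or_lt_of_le ha with rfl | ha'
  · rw [zero_add] at hab
    subst hab
    rw [zero_mul, zero_add, one_mul]
    exact hy
  · have h1 : 0 < a * (x * c) := mul_pos ha' hx
    have h2 : 0 ≤ b * (y * c) := mul_nonneg hb hy.le
    nlinarith

lemma cell_convex (z : Fin n → ℂ) : Convex ℝ (cellF σ R₁ R₂ z) := by
  rintro z₁ ⟨h1, h2, h3, h4⟩ z₂ ⟨g1, g2, g3, g4⟩ a b ha hb hab
  refine ⟨?_, ?_, ?_, ?_⟩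
  · rw [Rz_comb]
    exact Submodule.add_mem _ (Submodule.smul_mem _ a h1) (Submodule.smul_mem _ b g1)
  · rw [Iz_comb]
    exact Submodule.add_mem _ (Submodule.smul_mem _ a h2) (Submodule.smul_mem _ b g2)
  · intro β hβ
    rw [Rz_comb, inner_add_right, real_inner_smul_right, real_inner_smul_right]
    exact comb_pos (h3 β hβ) (g3 β hβ) ha hb hab
  · intro β hβ
    rw [Iz_comb, inner_add_right, real_inner_smul_right, real_inner_smul_right]
    exact comb_pos (h4 β hβ) (g4 β hβ) ha hb hab

lemma inner_Rz_continuous (β : EuclideanSpace ℝ (Fin n)) (c : ℝ) :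
    Continuous fun z' : Fin n → ℂ => ⟪β, Rz z'⟫ * c := by
  have h : (fun z' : Fin n → ℂ => ⟪β, Rz z'⟫ * c)
      = fun z' => (∑ i, β i * (z' i).re) * c := by
    funext z'
    rw [inner_euclidean]
    rfl
  rw [h]
  apply Continuous.mul _ continuous_const
  apply continuous_finset_sum
  intro i _
  exact continuous_const.mul (Complex.continuous_re.comp (continuous_apply i))

lemma inner_Iz_continuous (β : EuclideanSpace ℝ (Fin n)) (c : ℝ) :
    Continuous fun z' : Fin n → ℂ => ⟪β, Iz z'⟫ * c := by
  have h : (fun z' : Fin n → ℂ => ⟪β, Iz z'⟫ * c)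
      = fun z' => (∑ i, β i * (z' i).im) * c := by
    funext z'
    rw [inner_euclidean]
    rfl
  rw [h]
  apply Continuous.mul _ continuous_const
  apply continuous_finset_sum
  intro i _
  exact continuous_const.mul (Complex.continuous_im.comp (continuous_apply i))

include hFc in
lemma comp_eq {z : Fin n → ℂ} (hz : z ∈ F) :
    connectedComponentIn F z = cellF σ R₁ R₂ z := by
  apply Set.Subset.antisymm
  · -- clopen argument
    have hopenU : IsOpen {z' : Fin n → ℂ | (∀ β ∈ R₂, 0 < ⟪β, Rz z'⟫ * ⟪β, Rz z⟫)
        ∧ (∀ β ∈ R₁, 0 < ⟪β, Iz z'⟫ * ⟪β, Iz z⟫)} := by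
      have he : {z' : Fin n → ℂ | (∀ β ∈ R₂, 0 < ⟪β, Rz z'⟫ * ⟪β, Rz z⟫)
          ∧ (∀ β ∈ R₁, 0 < ⟪β, Iz z'⟫ * ⟪β, Iz z⟫)}
          = (⋂ β ∈ R₂, {z' | 0 < ⟪β, Rz z'⟫ * ⟪β, Rz z⟫})
            ∩ (⋂ β ∈ R₁, {z' | 0 < ⟪β, Iz z'⟫ * ⟪β, Iz z⟫}) := by
        ext z'
        simp [Set.mem_iInter]
      rw [he]
      apply IsOpen.inter
      · apply isOpen_biInter_finset
        intro β _
        exact isOpen_lt continuous_const (inner_Rz_continuous β _)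
      · apply isOpen_biInter_finset
        intro β _
        exact isOpen_lt continuous_const (inner_Iz_continuous β _)
    have hopenU' : IsOpen {z' : Fin n → ℂ | (∃ β ∈ R₂, ⟪β, Rz z'⟫ * ⟪β, Rz z⟫ < 0)
        ∨ (∃ β ∈ R₁, ⟪β, Iz z'⟫ * ⟪β, Iz z⟫ < 0)} := by
      have he : {z' : Fin n → ℂ | (∃ β ∈ R₂, ⟪β, Rz z'⟫ * ⟪β, Rz z⟫ < 0)
          ∨ (∃ β ∈ R₁, ⟪β, Iz z'⟫ * ⟪β, Iz z⟫ < 0)}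
          = (⋃ β ∈ R₂, {z' | ⟪β, Rz z'⟫ * ⟪β, Rz z⟫ < 0})
            ∪ (⋃ β ∈ R₁, {z' | ⟪β, Iz z'⟫ * ⟪β, Iz z⟫ < 0}) := by
        ext z'
        simp [Set.mem_iUnion]
      rw [he]
      apply IsOpen.union
      · apply isOpen_biUnion
        intro β _
        exact isOpen_lt (inner_Rz_continuous β _) continuous_const
      · apply isOpen_biUnion
        intro β _
        exact isOpen_lt (inner_Iz_continuous β _) continuous_const
    obtain ⟨hz1, hz2, hz3, hz4⟩ := (hFc z).mp hz
    have hpre_open : (Subtype.val ⁻¹' cellF σ R₁ R₂ z : Set ↥F)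
        = Subtype.val ⁻¹' {z' : Fin n → ℂ | (∀ β ∈ R₂, 0 < ⟪β, Rz z'⟫ * ⟪β, Rz z⟫)
          ∧ (∀ β ∈ R₁, 0 < ⟪β, Iz z'⟫ * ⟪β, Iz z⟫)} := by
      ext ⟨z', hz'⟩
      obtain ⟨g1, g2, g3, g4⟩ := (hFc z').mp hz'
      simp only [Set.mem_preimage, Set.mem_setOf_eq]
      constructor
      · rintro ⟨_, _, h3, h4⟩; exact ⟨h3, h4⟩
      · rintro ⟨h3, h4⟩; exact ⟨g1, g2, h3, h4⟩
    have hpre_closed : ((Subtype.val ⁻¹' cellF σ R₁ R₂ z : Set ↥F))ᶜ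
        = Subtype.val ⁻¹' {z' : Fin n → ℂ | (∃ β ∈ R₂, ⟪β, Rz z'⟫ * ⟪β, Rz z⟫ < 0)
          ∨ (∃ β ∈ R₁, ⟪β, Iz z'⟫ * ⟪β, Iz z⟫ < 0)} := by
      ext ⟨z', hz'⟩
      obtain ⟨g1, g2, g3, g4⟩ := (hFc z').mp hz'
      simp only [Set.mem_compl_iff, Set.mem_preimage, Set.mem_setOf_eq]
      constructor
      · intro hnot
        by_contra hcon
        push_neg at hcon
        apply hnot
        refine ⟨g1, g2, fun β hβ => ?_, fun β hβ => ?_⟩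
        · rcases (lt_or_gt_of_ne (mul_ne_zero (g3 β hβ) (hz3 β hβ))) with h | h
          · exact absurd h (not_lt.mpr (hcon.1 β hβ))
          · exact h
        · rcases (lt_or_gt_of_ne (mul_ne_zero (g4 β hβ) (hz4 β hβ))) with h | h
          · exact absurd h (not_lt.mpr (hcon.2 β hβ))
          · exact h
      · rintro (⟨β, hβ, hneg⟩ | ⟨β, hβ, hneg⟩) ⟨_, _, h3, h4⟩
        · exact absurd (h3 β hβ) (not_lt.mpr hneg.le)
        · exact absurd (h4 β hβ) (not_lt.mpr hneg.le)
    have hclopen : IsClopen (Subtype.val ⁻¹' cellF σ R₁ R₂ z : Set ↥F) := by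
      constructor
      · rw [← isOpen_compl_iff, hpre_closed]
        exact hopenU'.preimage continuous_subtype_val
      · rw [hpre_open]
        exact hopenU.preimage continuous_subtype_val
    rw [connectedComponentIn_eq_image hz]
    rintro _ ⟨w, hwcomp, rfl⟩
    exact hclopen.connectedComponent_subset
      (by exact mem_cell_self σ R₁ R₂ hFc hz) hwcomp
  · exact (cell_convex σ R₁ R₂ z).isPreconnected.subset_connectedComponentIn
      (mem_cell_self σ R₁ R₂ hFc hz) (cell_subset_F σ R₁ R₂ hFc z)

end Cells

def zp (x y : EuclideanSpace ℝ (Fin n)) : Fin n → ℂ := fun i => (x i : ℂ) + (y i) * Complex.I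

lemma Rz_zp (x y : E) : Rz (zp x y) = x := by
  ext i
  simp [Rz, zp]

lemma Iz_zp (x y : E) : Iz (zp x y) = y := by
  ext i
  simp [Iz, zp]

/-- let `σ` be a *special* involution in a finite Coxeter group `G`
(hypothesis `hspecial`: every root of `R` has a projection onto `V₁` or `V₂`
proportional to a root of `R₁ = R ∩ V₁` or of `R₂ = R ∩ V₂`), with `G₁`, `G₂`
the Coxeter subgroups generated by the reflections in `R₁`, `R₂`.  Then the
fixed point set of `z ↦ σ(z̄)` on the hyperplane complement `M_G` has exactly
`|G₁|·|G₂|` connected components, each of which is contractible. -/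
theorem stmt13 {n : ℕ}
    (R : Finset (EuclideanSpace ℝ (Fin n))) (hR0 : ∀ α ∈ R, α ≠ 0)
    (G : Subgroup (EuclideanSpace ℝ (Fin n) ≃ₗᵢ[ℝ] EuclideanSpace ℝ (Fin n))) [Finite G]
    (hGgen : G = Subgroup.closure
      {g | ∃ α ∈ R, g = Submodule.reflection (ℝ ∙ α)ᗮ})
    (hstab : ∀ g ∈ G, ∀ α ∈ R, g α ∈ R)
    (σ : EuclideanSpace ℝ (Fin n) ≃ₗᵢ[ℝ] EuclideanSpace ℝ (Fin n))
    (hσG : σ ∈ G) (hσ2 : σ * σ = 1)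
    (R₁ R₂ : Finset (EuclideanSpace ℝ (Fin n)))
    (hR₁ : (R₁ : Set (EuclideanSpace ℝ (Fin n)))
      = {α | α ∈ R ∧ α ∈ minusEigenspace σ})
    (hR₂ : (R₂ : Set (EuclideanSpace ℝ (Fin n)))
      = {α | α ∈ R ∧ α ∈ plusEigenspace σ})
    (G₁ G₂ : Subgroup (EuclideanSpace ℝ (Fin n) ≃ₗᵢ[ℝ] EuclideanSpace ℝ (Fin n)))
    (hG₁ : G₁ = Subgroup.closure {g | ∃ α ∈ R₁, g = Submodule.reflection (ℝ ∙ α)ᗮ})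
    (hG₂ : G₂ = Subgroup.closure {g | ∃ α ∈ R₂, g = Submodule.reflection (ℝ ∙ α)ᗮ})
    (hspecial : ∀ α ∈ R,
      (∃ c : ℝ, ∃ β ∈ R₁, (Submodule.orthogonalProjectionOnto (minusEigenspace σ) α
        : EuclideanSpace ℝ (Fin n)) = c • β) ∨
      (∃ c : ℝ, ∃ β ∈ R₂, (Submodule.orthogonalProjectionOnto (plusEigenspace σ) α
        : EuclideanSpace ℝ (Fin n)) = c • β))
    (F : Set (Fin n → ℂ))
    (hF : F = {z | (∀ α ∈ R, (∑ i, (α i : ℂ) * z i) ≠ 0) ∧ barAction σ z = z}) :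
    Nat.card (ConnectedComponents F) = Nat.card G₁ * Nat.card G₂ ∧
      ∀ z ∈ F, ContractibleSpace (connectedComponentIn F z) := by
  classical
  have hmemR₂ : ∀ β, β ∈ R₂ ↔ β ∈ R ∧ β ∈ plusEigenspace σ := by
    intro β
    rw [← Finset.mem_coe, hR₂]
    exact Iff.rfl
  have hmemR₁ : ∀ β, β ∈ R₁ ↔ β ∈ R ∧ β ∈ minusEigenspace σ := by
    intro β
    rw [← Finset.mem_coe, hR₁]
    exact Iff.rfl
  have hR₂0 : ∀ β ∈ R₂, β ≠ 0 := fun β hβ => hR0 β ((hmemR₂ β).mp hβ).1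
  have hR₁0 : ∀ β ∈ R₁, β ≠ 0 := fun β hβ => hR0 β ((hmemR₁ β).mp hβ).1
  have hsrefG : ∀ α ∈ R, sref α ∈ G := fun α hα => by
    rw [hGgen]
    exact Subgroup.subset_closure ⟨α, hα, rfl⟩
  have hR₂stab : ∀ β ∈ R₂, ∀ γ ∈ R₂, sref β γ ∈ R₂ := by
    intro β hβ γ hγ
    obtain ⟨hβR, hβV⟩ := (hmemR₂ β).mp hβ
    obtain ⟨hγR, hγV⟩ := (hmemR₂ γ).mp hγ
    apply (hmemR₂ _).mpr
    refine ⟨hstab _ (hsrefG β hβR) γ hγR, ?_⟩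
    rw [sref_apply (hR0 β hβR)]
    exact Submodule.sub_mem _ hγV (Submodule.smul_mem _ _ hβV)
  have hR₁stab : ∀ β ∈ R₁, ∀ γ ∈ R₁, sref β γ ∈ R₁ := by
    intro β hβ γ hγ
    obtain ⟨hβR, hβV⟩ := (hmemR₁ β).mp hβ
    obtain ⟨hγR, hγV⟩ := (hmemR₁ γ).mp hγ
    apply (hmemR₁ _).mpr
    refine ⟨hstab _ (hsrefG β hβR) γ hγR, ?_⟩
    rw [sref_apply (hR0 β hβR)]
    exact Submodule.sub_mem _ hγV (Submodule.smul_mem _ _ hβV)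
  have hW₂ : Wgrp R₂ = G₂ := by rw [hG₂]; rfl
  have hW₁ : Wgrp R₁ = G₁ := by rw [hG₁]; rfl
  have hW₂le : Wgrp R₂ ≤ G := by
    apply (Subgroup.closure_le G).mpr
    rintro g ⟨β, hβ, rfl⟩
    exact hsrefG β ((hmemR₂ β).mp hβ).1
  have hW₁le : Wgrp R₁ ≤ G := by
    apply (Subgroup.closure_le G).mpr
    rintro g ⟨β, hβ, rfl⟩
    exact hsrefG β ((hmemR₁ β).mp hβ).1
  haveI hFin₂ : Finite ↥(Wgrp R₂) :=
    Finite.of_injective (Subgroup.inclusion hW₂le) (Subgroup.inclusion_injective hW₂le)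
  haveI hFin₁ : Finite ↥(Wgrp R₁) :=
    Finite.of_injective (Subgroup.inclusion hW₁le) (Subgroup.inclusion_injective hW₁le)
  obtain ⟨q₂, hq₂V, hq₂⟩ := exists_generic (plusEigenspace σ) R₂
    (fun β hβ => ⟨((hmemR₂ β).mp hβ).2, hR₂0 β hβ⟩)
  obtain ⟨q₁, hq₁V, hq₁⟩ := exists_generic (minusEigenspace σ) R₁
    (fun β hβ => ⟨((hmemR₁ β).mp hβ).2, hR₁0 β hβ⟩)
  have hFc : ∀ z, z ∈ F ↔ (Rz z ∈ plusEigenspace σ ∧ Iz z ∈ minusEigenspace σ ∧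
      (∀ β ∈ R₂, ⟪β, Rz z⟫ ≠ 0) ∧ (∀ β ∈ R₁, ⟪β, Iz z⟫ ≠ 0)) := by
    intro z
    rw [hF]
    constructor
    · rintro ⟨hroot, hbar⟩
      obtain ⟨h1, h2⟩ := (barAction_fixed_iff σ z).mp hbar
      have hRzV : Rz z ∈ plusEigenspace σ := mem_plusE.mpr h1
      have hIzV : Iz z ∈ minusEigenspace σ := mem_minusE.mpr h2
      refine ⟨hRzV, hIzV, ?_, ?_⟩
      · intro β hβ
        obtain ⟨hβR, hβV⟩ := (hmemR₂ β).mp hβ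
        have h3 := hroot β hβR
        rw [sum_root_eq] at h3
        have h4 : ⟪β, Iz z⟫ = 0 := orth_pm hβV hIzV
        rw [h4] at h3
        intro h5
        rw [h5] at h3
        simp at h3
      · intro β hβ
        obtain ⟨hβR, hβV⟩ := (hmemR₁ β).mp hβ
        have h3 := hroot β hβR
        rw [sum_root_eq] at h3
        have h4 : ⟪β, Rz z⟫ = 0 := by
          rw [real_inner_comm]
          exact orth_pm hRzV hβV
        rw [h4] at h3
        intro h5
        rw [h5] at h3
        simp at h3
    · rintro ⟨h1, h2, h3, h4⟩
      refine ⟨?_, (barAction_fixed_iff σ z).mpr ⟨mem_plusE.mp h1, mem_minusE.mp h2⟩⟩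
      intro α hα h0
      rw [sum_root_eq] at h0
      have hre : ⟪α, Rz z⟫ = 0 := by
        have := congrArg Complex.re h0
        simpa using this
      have him : ⟪α, Iz z⟫ = 0 := by
        have := congrArg Complex.im h0
        simpa using this
      rcases hspecial α hα with ⟨c, β, hβ, hproj⟩ | ⟨c, β, hβ, hproj⟩
      · by_cases hc : c = 0
        · subst hc
          rw [zero_smul] at hproj
          exact h3 α ((hmemR₂ α).mpr ⟨hα, proj_minusE_zero hσ2 hproj⟩) hre
        · have h5 : ⟪α, Iz z⟫ = c * ⟪β, Iz z⟫ := by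
            rw [inner_proj_minusE hσ2 h2, hproj, real_inner_smul_left]
          rw [h5] at him
          rcases mul_eq_zero.mp him with h6 | h6
          · exact hc h6
          · exact h4 β hβ h6
      · by_cases hc : c = 0
        · subst hc
          rw [zero_smul] at hproj
          exact h4 α ((hmemR₁ α).mpr ⟨hα, proj_plusE_zero hσ2 hproj⟩) him
        · have h5 : ⟪α, Rz z⟫ = c * ⟪β, Rz z⟫ := by
            rw [inner_proj_plusE hσ2 h1, hproj, real_inner_smul_left]
          rw [h5] at hre
          rcases mul_eq_zero.mp hre with h6 | h6
          · exact hc h6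
          · exact h3 β hβ h6
  -- membership of constructed points
  have hptF : ∀ g₂ ∈ Wgrp R₂, ∀ g₁ ∈ Wgrp R₁, zp (g₂ q₂) (g₁ q₁) ∈ F := by
    intro g₂ hg₂ g₁ hg₁
    apply (hFc _).mpr
    rw [Rz_zp, Iz_zp]
    refine ⟨?_, ?_, ?_, ?_⟩
    · exact (Wgrp_preserves R₂ hR₂0 (plusEigenspace σ)
        (fun β hβ => ((hmemR₂ β).mp hβ).2) g₂ hg₂).1 q₂ hq₂V
    · exact (Wgrp_preserves R₁ hR₁0 (minusEigenspace σ)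
        (fun β hβ => ((hmemR₁ β).mp hβ).2) g₁ hg₁).1 q₁ hq₁V
    · intro β hβ
      rw [inner_apply_right]
      exact hq₂ _ (W_stab hR₂0 hR₂stab _ (inv_mem hg₂) β hβ)
    · intro β hβ
      rw [inner_apply_right]
      exact hq₁ _ (W_stab hR₁0 hR₁stab _ (inv_mem hg₁) β hβ)
  have hmemW₂ : ∀ g : ↥G₂, (g : EuclideanSpace ℝ (Fin n) ≃ₗᵢ[ℝ] EuclideanSpace ℝ (Fin n)) ∈ Wgrp R₂ := by
    intro g
    rw [hW₂]
    exact g.2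
  have hmemW₁ : ∀ g : ↥G₁, (g : EuclideanSpace ℝ (Fin n) ≃ₗᵢ[ℝ] EuclideanSpace ℝ (Fin n)) ∈ Wgrp R₁ := by
    intro g
    rw [hW₁]
    exact g.2
  set Ψ : ↥G₁ × ↥G₂ → ConnectedComponents ↥F := fun p =>
    ConnectedComponents.mk (⟨zp ((p.2 : EuclideanSpace ℝ (Fin n) ≃ₗᵢ[ℝ] EuclideanSpace ℝ (Fin n)) q₂)
      ((p.1 : EuclideanSpace ℝ (Fin n) ≃ₗᵢ[ℝ] EuclideanSpace ℝ (Fin n)) q₁),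
      hptF _ (hmemW₂ p.2) _ (hmemW₁ p.1)⟩ : ↥F) with hΨ
  have hinj : Function.Injective Ψ := by
    intro p p' heq
    rw [hΨ] at heq
    simp only at heq
    have hmem := ConnectedComponents.coe_eq_coe'.mp heq
    set z' := zp ((p.2 : EuclideanSpace ℝ (Fin n) ≃ₗᵢ[ℝ] EuclideanSpace ℝ (Fin n)) q₂)
      ((p.1 : EuclideanSpace ℝ (Fin n) ≃ₗᵢ[ℝ] EuclideanSpace ℝ (Fin n)) q₁) with hz'
    set z'' := zp ((p'.2 : EuclideanSpace ℝ (Fin n) ≃ₗᵢ[ℝ] EuclideanSpace ℝ (Fin n)) q₂)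
      ((p'.1 : EuclideanSpace ℝ (Fin n) ≃ₗᵢ[ℝ] EuclideanSpace ℝ (Fin n)) q₁) with hz''
    have hz'F : z' ∈ F := hptF _ (hmemW₂ p.2) _ (hmemW₁ p.1)
    have hz''F : z'' ∈ F := hptF _ (hmemW₂ p'.2) _ (hmemW₁ p'.1)
    have hcomp : z' ∈ connectedComponentIn F z'' := by
      rw [connectedComponentIn_eq_image hz''F]
      exact ⟨⟨z', hz'F⟩, hmem, rfl⟩
    rw [comp_eq σ R₁ R₂ hFc hz''F] at hcomp
    obtain ⟨_, _, hc3, hc4⟩ := hcomp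
    rw [hz', hz''] at hc3 hc4
    have h2eq : (p.2 : EuclideanSpace ℝ (Fin n) ≃ₗᵢ[ℝ] EuclideanSpace ℝ (Fin n))
        = (p'.2 : EuclideanSpace ℝ (Fin n) ≃ₗᵢ[ℝ] EuclideanSpace ℝ (Fin n)) := by
      apply inj_thm hR₂0 hR₂stab hq₂ (hmemW₂ p.2) (hmemW₂ p'.2)
      intro β hβ
      have := hc3 β hβ
      rwa [Rz_zp, Rz_zp] at this
    have h1eq : (p.1 : EuclideanSpace ℝ (Fin n) ≃ₗᵢ[ℝ] EuclideanSpace ℝ (Fin n))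
        = (p'.1 : EuclideanSpace ℝ (Fin n) ≃ₗᵢ[ℝ] EuclideanSpace ℝ (Fin n)) := by
      apply inj_thm hR₁0 hR₁stab hq₁ (hmemW₁ p.1) (hmemW₁ p'.1)
      intro β hβ
      have := hc4 β hβ
      rwa [Iz_zp, Iz_zp] at this
    exact Prod.ext (Subtype.ext h1eq) (Subtype.ext h2eq)
  have hsurj : Function.Surjective Ψ := by
    intro c
    obtain ⟨⟨z, hzF⟩, rfl⟩ := ConnectedComponents.surjective_coe c
    obtain ⟨h1, h2, h3, h4⟩ := (hFc z).mp hzF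
    obtain ⟨g₂, hg₂W, hg₂cell⟩ := trans_thm hR₂0 hR₂stab h3 hq₂
    obtain ⟨g₁, hg₁W, hg₁cell⟩ := trans_thm hR₁0 hR₁stab h4 hq₁
    refine ⟨⟨⟨g₁, hW₁ ▸ hg₁W⟩, ⟨g₂, hW₂ ▸ hg₂W⟩⟩, ?_⟩
    rw [hΨ]
    simp only
    set z' := zp (g₂ q₂) (g₁ q₁) with hz'
    have hz'F : z' ∈ F := hptF _ hg₂W _ hg₁W
    have hz'cell : z' ∈ cellF σ R₁ R₂ z := by
      refine ⟨?_, ?_, ?_, ?_⟩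
      · rw [hz', Rz_zp]
        exact (Wgrp_preserves R₂ hR₂0 (plusEigenspace σ)
          (fun β hβ => ((hmemR₂ β).mp hβ).2) g₂ hg₂W).1 q₂ hq₂V
      · rw [hz', Iz_zp]
        exact (Wgrp_preserves R₁ hR₁0 (minusEigenspace σ)
          (fun β hβ => ((hmemR₁ β).mp hβ).2) g₁ hg₁W).1 q₁ hq₁V
      · intro β hβ
        rw [hz', Rz_zp]
        exact hg₂cell β hβ
      · intro β hβ
        rw [hz', Iz_zp]
        exact hg₁cell β hβ
    have hz'comp : z' ∈ connectedComponentIn F z := by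
      rw [comp_eq σ R₁ R₂ hFc hzF]
      exact hz'cell
    rw [connectedComponentIn_eq_image hzF] at hz'comp
    obtain ⟨w, hwcomp, hwval⟩ := hz'comp
    have hw : (⟨z', hz'F⟩ : ↥F) = w := Subtype.ext hwval.symm
    rw [hw]
    exact ConnectedComponents.coe_eq_coe'.mpr hwcomp
  constructor
  · have hcard := Nat.card_congr (Equiv.ofBijective Ψ ⟨hinj, hsurj⟩)
    rw [Nat.card_prod] at hcard
    exact hcard.symm
  · intro z hz
    rw [comp_eq σ R₁ R₂ hFc hz]
    exact (cell_convex σ R₁ R₂ z).contractibleSpace ⟨z, mem_cell_self σ R₁ R₂ hFc hz⟩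

end
end
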